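/- arXiv:0707.3963 — 2 statements merged into one kernel-verified Lean document; each statement's English description precedes it below -/
import Mathlib

section
/- For every nonempty subset I ⊆ {0,…,l}: ⟨ν_I,α_i^∨⟩ + δ_{i,0} = 0 for all i ∉ I, and ⟨ν_I,α_i^∨⟩ + δ_{i,0} > 0 for all i ∈ I. Equivalently, the point ν_I^♯ := B^♯(ν_I) lies in the relative interior of the face {ξ ∈ Δ : ⟨α_i,ξ⟩ + δ_{i,0} = 0 for all i ∉ I} of the fundamental alcove Δ := {ξ ∈ 𝔱 : ⟨α_i,ξ⟩ + δ_{i,0} ≥ 0 for i = 0,…,l}. -/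
/- Common setup: an irreducible reduced crystallographic root system `R ⊂ 𝔱*` spanning `𝔱*`,
with simple roots `α 1,…,α l`, `α 0 = -θ` (θ the highest root), coroots, weight lattice,
(level `m`) affine Weyl groups acting on `𝔱*` and `𝔱`, anti-invariants, skew-symmetrization
maps and the associated chain complexes, following Meinrenken,
"On the quantization of conjugacy classes", Section 5. -/

noncomputable section
open scoped BigOperators InnerProductSpace Classical
open Function

namespace CCQ

section Generic

variable {M : Type*} [AddCommGroup M] [Module ℝ M]

/-- The affine reflection `x ↦ x - (f x + c) • v`, where `f v = 2`. -/
def aref {f : Module.Dual ℝ M} {v : M} (h : f v = 2) (c : ℝ) : M ≃ᵃ[ℝ] M :=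
  (Module.reflection h).toAffineEquiv.trans (AffineEquiv.constVAdd ℝ M (-(c • v)))

/-- The determinant of the linear part of an affine transformation, recorded as an
integer sign (all the affine transformations considered here are products of
reflections, whose linear parts have determinant `±1`). -/
def asign (w : M ≃ᵃ[ℝ] M) : ℤ :=
  if LinearMap.det w.linear.toLinearMap = 1 then 1 else -1

/-- `φ` is anti-invariant under the subgroup `H`: `w·φ = det(w)·φ`, for the action
`(w·φ)(x) = φ(w⁻¹ x)`. -/
def AntiInv (H : Subgroup (M ≃ᵃ[ℝ] M)) (φ : M → ℤ) : Prop :=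
  ∀ w ∈ H, ∀ x : M, φ (w⁻¹ x) = asign w * φ x

/-- `Sk^H(x) = Σ_{w ∈ H} det(w) · δ_{w x}` (δ-function skew-symmetrization over a
(finite) subgroup `H`). -/
def SkOrb (H : Subgroup (M ≃ᵃ[ℝ] M)) (x : M) : M → ℤ := fun y =>
  ∑ᶠ w : H, if y = (w : M ≃ᵃ[ℝ] M) x then asign (w : M ≃ᵃ[ℝ] M) else 0

/-- `T` is a complete set of representatives of the left cosets `K/H`. -/
def IsRepFinset (H K : Subgroup (M ≃ᵃ[ℝ] M)) (T : Finset (M ≃ᵃ[ℝ] M)) : Prop :=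
  (↑T : Set (M ≃ᵃ[ℝ] M)) ⊆ (K : Set (M ≃ᵃ[ℝ] M)) ∧
    ∀ w ∈ K, ∃! u, u ∈ T ∧ u⁻¹ * w ∈ H

/-- `T` is a complete set of representatives of the left cosets `K/H` (possibly infinite). -/
def IsRepSet (H K : Subgroup (M ≃ᵃ[ℝ] M)) (T : Set (M ≃ᵃ[ℝ] M)) : Prop :=
  T ⊆ (K : Set (M ≃ᵃ[ℝ] M)) ∧ ∀ w ∈ K, ∃! u, u ∈ T ∧ u⁻¹ * w ∈ H

/-- Relative skew-symmetrization `Σ_u det(u)·(u·φ)` over a finite set of coset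
representatives. -/
def SkRep (T : Finset (M ≃ᵃ[ℝ] M)) (φ : M → ℤ) : M → ℤ := fun x =>
  ∑ u ∈ T, asign u * φ (u⁻¹ x)

/-- Skew-symmetrization `Σ_u det(u)·(u·φ)` over a (possibly infinite, pointwise finite)
set of coset representatives. -/
def SkRepSet (T : Set (M ≃ᵃ[ℝ] M)) (φ : M → ℤ) : M → ℤ := fun x =>
  ∑ᶠ u : T, asign (u : M ≃ᵃ[ℝ] M) * φ ((u : M ≃ᵃ[ℝ] M)⁻¹ x)

/-- The chain supported on the single direct summand indexed by `I`. -/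
def single {n : ℕ} (I : Finset (Fin n)) (φ : M → ℤ) : Finset (Fin n) → M → ℤ := fun K =>
  if K = I then φ else 0

/-- The simplicial differential `∂`: on the summand indexed by `I = {i₀ < … < i_p}`,
`∂φ = Σ_r (-1)^r Sk_I^{δ_r I}(φ)`, written via its components: the component of `∂c` in
the summand indexed by `K` is `Σ_{i ∉ K} (-1)^{#{j ∈ K : j < i}} Sk_{K∪{i}}^K (c (K∪{i}))`.
The skew-symmetrizations `Sk_I^K` are computed using the chosen coset representative
sets `Srep K I` for `W_K/W_I`. -/
def bdGen {n : ℕ} (Srep : Finset (Fin n) → Finset (Fin n) → Finset (M ≃ᵃ[ℝ] M))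
    (c : Finset (Fin n) → M → ℤ) : Finset (Fin n) → M → ℤ := fun K x =>
  ∑ i ∈ Kᶜ, (-1 : ℤ) ^ (K.filter (fun j => j < i)).card *
    SkRep (Srep K (insert i K)) (c (insert i K)) x

/-- Restriction of a `ℤ`-valued function to a subset (extension by zero). -/
def restr (O : Set M) (φ : M → ℤ) : M → ℤ := fun x => if x ∈ O then φ x else 0

end Generic

/-- An irreducible reduced crystallographic root system `R` in `𝔱*`, spanning `𝔱*`,
together with a choice of simple roots `α 1, …, α l` and `α 0 := -θ`, where `θ` is the
highest root.  `coroot β ∈ 𝔱` is the coroot `β^∨` of a root `β ∈ R`. -/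
structure RSD (𝔱 : Type*) [AddCommGroup 𝔱] [Module ℝ 𝔱] where
  l : ℕ
  hl : 0 < l
  R : Set (Module.Dual ℝ 𝔱)
  finR : R.Finite
  spanR : Submodule.span ℝ R = ⊤
  coroot : Module.Dual ℝ 𝔱 → 𝔱
  pair_self : ∀ β ∈ R, β (coroot β) = 2
  cryst : ∀ β ∈ R, ∀ γ ∈ R, ∃ n : ℤ, γ (coroot β) = (n : ℝ)
  reduced : ∀ β ∈ R, ∀ t : ℝ, t • β ∈ R → t = 1 ∨ t = -1
  reflect_mem : ∀ β ∈ R, ∀ γ ∈ R, γ - γ (coroot β) • β ∈ R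
  α : Fin (l + 1) → Module.Dual ℝ 𝔱
  α_mem : ∀ i, α i ∈ R
  indep : LinearIndependent ℝ fun i : Fin l => α i.succ
  base : ∀ β ∈ R, (∃ c : Fin l → ℕ, β = ∑ i, (c i : ℝ) • α i.succ) ∨
    ∃ c : Fin l → ℕ, β = -∑ i, (c i : ℝ) • α i.succ
  highest : ∀ β ∈ R, ∃ c : Fin l → ℕ, -α 0 - β = ∑ i, (c i : ℝ) • α i.succ
  irred : ∀ T : Set (Fin l), T.Nonempty → Tᶜ.Nonempty →
    ∃ i ∈ T, ∃ j ∈ Tᶜ, α i.succ (coroot (α j.succ)) ≠ 0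

namespace RSD

variable {𝔱 : Type*} [AddCommGroup 𝔱] [Module ℝ 𝔱] (S : RSD 𝔱)

/-- The highest root `θ`. -/
def theta : Module.Dual ℝ 𝔱 := -S.α 0

/-- The Kronecker delta `δ_{i,0}`. -/
def kd (i : Fin (S.l + 1)) : ℝ := if i = 0 then 1 else 0

/-- The positive roots. -/
def posRoots : Finset (Module.Dual ℝ 𝔱) :=
  S.finR.toFinset.filter fun β => ∃ c : Fin S.l → ℕ, β = ∑ i, (c i : ℝ) • S.α i.succ

/-- `ρ`, the half-sum of the positive roots. -/
def rho : Module.Dual ℝ 𝔱 := (2 : ℝ)⁻¹ • ∑ β ∈ S.posRoots, β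

/-- The dual Coxeter number `h^∨ = 1 + ⟨ρ, θ^∨⟩`. -/
def hv : ℝ := 1 + S.rho (S.coroot S.theta)

/-- The weight lattice `Λ* = {μ : ⟨μ, β^∨⟩ ∈ ℤ for all β ∈ R}`. -/
def wlat : Set (Module.Dual ℝ 𝔱) := {μ | ∀ β ∈ S.R, ∃ n : ℤ, μ (S.coroot β) = (n : ℝ)}

theorem pairD (i : Fin (S.l + 1)) :
    Module.Dual.eval ℝ 𝔱 (S.coroot (S.α i)) (S.α i) = 2 := by
  simpa using S.pair_self (S.α i) (S.α_mem i)

theorem pairDR {β : Module.Dual ℝ 𝔱} (hβ : β ∈ S.R) :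
    Module.Dual.eval ℝ 𝔱 (S.coroot β) β = 2 := by
  simpa using S.pair_self β hβ

/-- The linear reflection `s_{α_i} : ν ↦ ν - ⟨ν, α_i^∨⟩ α_i` on `𝔱*`. -/
def srefl (i : Fin (S.l + 1)) : Module.Dual ℝ 𝔱 ≃ₗ[ℝ] Module.Dual ℝ 𝔱 :=
  Module.reflection (S.pairD i)

/-- The linear reflection `s_β` on `𝔱*`, for a root `β ∈ R`. -/
def sreflRoot {β : Module.Dual ℝ 𝔱} (hβ : β ∈ S.R) :
    Module.Dual ℝ 𝔱 ≃ₗ[ℝ] Module.Dual ℝ 𝔱 :=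
  Module.reflection (S.pairDR hβ)

/-- The Weyl group `W` acting on `𝔱*` (viewed inside the group of affine
transformations of `𝔱*`): the group generated by the reflections `s_β`, `β ∈ R`. -/
def WeylA : Subgroup (Module.Dual ℝ 𝔱 ≃ᵃ[ℝ] Module.Dual ℝ 𝔱) :=
  Subgroup.closure {w | ∃ β, ∃ hβ : β ∈ S.R, w = (S.sreflRoot hβ).toAffineEquiv}

/-- The subgroup `W̄_I ⊆ W` of linear automorphisms of `𝔱*` generated by the
reflections `s_{α_i}`, `i ∉ I`. -/
def WbarI (I : Finset (Fin (S.l + 1))) :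
    Subgroup (Module.Dual ℝ 𝔱 ≃ₗ[ℝ] Module.Dual ℝ 𝔱) :=
  Subgroup.closure {e | ∃ i ∉ I, e = S.srefl i}

/-- The level `m` affine reflection `σ_i : ν ↦ ν - (⟨ν,α_i^∨⟩ + m δ_{i,0}) α_i` of `𝔱*`. -/
def sigma (m : ℝ) (i : Fin (S.l + 1)) :
    Module.Dual ℝ 𝔱 ≃ᵃ[ℝ] Module.Dual ℝ 𝔱 :=
  aref (S.pairD i) (m * S.kd i)

/-- The level `m` affine Weyl group `W_aff(m)`, acting on `𝔱*`. -/
def WaffA (m : ℝ) : Subgroup (Module.Dual ℝ 𝔱 ≃ᵃ[ℝ] Module.Dual ℝ 𝔱) :=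
  Subgroup.closure (Set.range (S.sigma m))

/-- The subgroup `W_I ⊆ W_aff(m)` generated by the `σ_i` with `i ∉ I`. -/
def WIA (m : ℝ) (I : Finset (Fin (S.l + 1))) :
    Subgroup (Module.Dual ℝ 𝔱 ≃ᵃ[ℝ] Module.Dual ℝ 𝔱) :=
  Subgroup.closure {w | ∃ i ∉ I, w = S.sigma m i}

/-- `ℤ[Λ*]^{W_I-as}`: finitely supported functions `Λ* → ℤ` that are `W_I`-anti-invariant. -/
def ZLamAS (m : ℝ) (I : Finset (Fin (S.l + 1))) : Set (Module.Dual ℝ 𝔱 → ℤ) :=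
  {φ | (support φ).Finite ∧ support φ ⊆ S.wlat ∧ AntiInv (S.WIA m I) φ}

/-- `ℤ[[Λ*]]^{W_aff-as}`: all functions `Λ* → ℤ` that are `W_aff(m)`-anti-invariant. -/
def ZZLamAS (m : ℝ) : Set (Module.Dual ℝ 𝔱 → ℤ) :=
  {φ | support φ ⊆ S.wlat ∧ AntiInv (S.WaffA m) φ}

/-- The chain group `C_p = ⊕_{|I| = p+1} ℤ[Λ*]^{W_I-as}`, realized as the set of
families `c` with `c I ∈ ℤ[Λ*]^{W_I-as}` for `#I = p+1` and `c I = 0` otherwise. -/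
def ChainA (m : ℝ) (p : ℕ) : Set (Finset (Fin (S.l + 1)) → Module.Dual ℝ 𝔱 → ℤ) :=
  {c | ∀ I, (I.card = p + 1 → c I ∈ S.ZLamAS m I) ∧ (I.card ≠ p + 1 → c I = 0)}

/-- The family `Srep` provides coset representatives of `W_K/W_I` for all `K ⊆ I`. -/
def RepFamilyA (m : ℝ)
    (Srep : Finset (Fin (S.l + 1)) → Finset (Fin (S.l + 1)) →
      Finset (Module.Dual ℝ 𝔱 ≃ᵃ[ℝ] Module.Dual ℝ 𝔱)) : Prop :=
  ∀ K I : Finset (Fin (S.l + 1)), K.Nonempty → K ⊆ I →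
    IsRepFinset (S.WIA m I) (S.WIA m K) (Srep K I)

/-- The family `Seps` provides coset representatives of `W_aff(m)/W_{{i}}`. -/
def RepEpsA (m : ℝ)
    (Seps : Fin (S.l + 1) → Set (Module.Dual ℝ 𝔱 ≃ᵃ[ℝ] Module.Dual ℝ 𝔱)) : Prop :=
  ∀ i, IsRepSet (S.WIA m {i}) (S.WaffA m) (Seps i)

/-- The augmentation `ε : C_0 → ℤ[[Λ*]]^{W_aff-as}`, given on the summand indexed by
`{i}` by `Σ_u det(u)·(u·φ)`, `u` running over the coset representatives `Seps i`. -/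
def epsA (Seps : Fin (S.l + 1) → Set (Module.Dual ℝ 𝔱 ≃ᵃ[ℝ] Module.Dual ℝ 𝔱))
    (c : Finset (Fin (S.l + 1)) → Module.Dual ℝ 𝔱 → ℤ) : Module.Dual ℝ 𝔱 → ℤ := fun x =>
  ∑ i, SkRepSet (Seps i) (c {i}) x

/-- The orbit of `μ ∈ 𝔱*` under the level `m` affine Weyl group. -/
def orbA (m : ℝ) (μ : Module.Dual ℝ 𝔱) : Set (Module.Dual ℝ 𝔱) :=
  {ν | ∃ w ∈ S.WaffA m, ν = w μ}

/-- `Λ*_{I,k} = {μ ∈ Λ* : ⟨μ,α_i^∨⟩ + k δ_{i,0} ≥ 0 for all i ∉ I}`. -/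
def LamIk (k : ℝ) (I : Finset (Fin (S.l + 1))) : Set (Module.Dual ℝ 𝔱) :=
  {μ ∈ S.wlat | ∀ i ∉ I, μ (S.coroot (S.α i)) + k * S.kd i ≥ 0}

/-- `Λ*_k`, the set of level `k` weights. -/
def LamK (k : ℝ) : Set (Module.Dual ℝ 𝔱) :=
  {μ ∈ S.wlat | ∀ i, μ (S.coroot (S.α i)) + k * S.kd i ≥ 0}

/-- The positive roots of `R_I = R ∩ ℤ-span(𝔖_I)` relative to the base
`𝔖_I = {α_i : i ∉ I}`: the roots that are `ℕ`-combinations of `𝔖_I`. -/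
def posRootsI (I : Finset (Fin (S.l + 1))) : Finset (Module.Dual ℝ 𝔱) :=
  S.finR.toFinset.filter fun β =>
    ∃ c : Fin (S.l + 1) → ℕ, (∀ i ∈ I, c i = 0) ∧ β = ∑ i, (c i : ℝ) • S.α i

/-- `ρ_I`, the half-sum of the positive roots of `R_I`. -/
def rhoI (I : Finset (Fin (S.l + 1))) : Module.Dual ℝ 𝔱 :=
  (2 : ℝ)⁻¹ • ∑ β ∈ S.posRootsI I, β

/-- `ν_I = (ρ - ρ_I)/h^∨`. -/
def nuI (I : Finset (Fin (S.l + 1))) : Module.Dual ℝ 𝔱 := S.hv⁻¹ • (S.rho - S.rhoI I)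

theorem pairB (i : Fin (S.l + 1)) : S.α i (S.coroot (S.α i)) = 2 :=
  S.pair_self (S.α i) (S.α_mem i)

/-- The affine reflection `r_i : ξ ↦ ξ - (⟨α_i,ξ⟩ + δ_{i,0}) α_i^∨` of `𝔱`, i.e. the
orthogonal (for the basic inner product) reflection in the hyperplane
`{ξ : ⟨α_i,ξ⟩ + δ_{i,0} = 0}`. -/
def rrefl (i : Fin (S.l + 1)) : 𝔱 ≃ᵃ[ℝ] 𝔱 := aref (S.pairB i) (S.kd i)

/-- The affine Weyl group `W_aff` acting on `𝔱`, generated by `r_0, …, r_l`. -/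
def WaffB : Subgroup (𝔱 ≃ᵃ[ℝ] 𝔱) := Subgroup.closure (Set.range S.rrefl)

/-- The subgroup `W_I ⊆ W_aff` generated by the `r_i` with `i ∉ I`. -/
def WIB (I : Finset (Fin (S.l + 1))) : Subgroup (𝔱 ≃ᵃ[ℝ] 𝔱) :=
  Subgroup.closure {w | ∃ i ∉ I, w = S.rrefl i}

/-- The orbit `V = W_aff · ξ ⊆ 𝔱`. -/
def orbB (ξ : 𝔱) : Set 𝔱 := {x | ∃ w ∈ S.WaffB, x = w ξ}

/-- `ℓ(x) = min {ℓ(w) : w ∈ W_aff, x = w·ξ}`: the minimal length of a word in the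
generators `r_0,…,r_l` moving `ξ` to `x`. -/
def lenPt (ξ x : 𝔱) : ℕ :=
  sInf {n | ∃ L : List (Fin (S.l + 1)), L.length = n ∧ x = (L.map S.rrefl).prod ξ}

/-- `𝔱_{I,+} = {ξ : ⟨α_i,ξ⟩ + δ_{i,0} ≥ 0 for all i ∉ I}`. -/
def tplus (I : Finset (Fin (S.l + 1))) : Set 𝔱 := {ξ | ∀ i ∉ I, S.α i ξ + S.kd i ≥ 0}

/-- `V̄^I = V ∩ 𝔱_{I,+}`. -/
def VbarI (ξ : 𝔱) (I : Finset (Fin (S.l + 1))) : Set 𝔱 := S.orbB ξ ∩ S.tplus I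

/-- `V^I = V ∩ int(𝔱_{I,+})`. -/
def VIset [TopologicalSpace 𝔱] (ξ : 𝔱) (I : Finset (Fin (S.l + 1))) : Set 𝔱 :=
  S.orbB ξ ∩ interior (S.tplus I)

/-- `ℤ[V]^{W_I-as}`: finitely supported functions `V → ℤ` that are `W_I`-anti-invariant. -/
def ZVAS (ξ : 𝔱) (I : Finset (Fin (S.l + 1))) : Set (𝔱 → ℤ) :=
  {φ | (support φ).Finite ∧ support φ ⊆ S.orbB ξ ∧ AntiInv (S.WIB I) φ}

/-- The chain group `C_p(J) = ⊕_{|I| = p+1} ℤ[V]^{W_I-as}`. -/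
def ChainB (ξ : 𝔱) (p : ℕ) : Set (Finset (Fin (S.l + 1)) → 𝔱 → ℤ) :=
  {c | ∀ I, (I.card = p + 1 → c I ∈ S.ZVAS ξ I) ∧ (I.card ≠ p + 1 → c I = 0)}

/-- The family `Srep` provides coset representatives of `W_K/W_I` for all `K ⊆ I`
(affine Weyl group acting on `𝔱`). -/
def RepFamilyB (Srep : Finset (Fin (S.l + 1)) → Finset (Fin (S.l + 1)) →
    Finset (𝔱 ≃ᵃ[ℝ] 𝔱)) : Prop :=
  ∀ K I : Finset (Fin (S.l + 1)), K.Nonempty → K ⊆ I →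
    IsRepFinset (S.WIB I) (S.WIB K) (Srep K I)

/-- The filtration `F_N C_p(J)`: the subgroup generated by the basis elements
`β_I(x) = Sk^I(x)` with `#I = p+1`, `x ∈ V^I`, `ℓ(x) ≤ N`. -/
def FNB [TopologicalSpace 𝔱] (ξ : 𝔱) (N : ℤ) (p : ℕ) :
    AddSubgroup (Finset (Fin (S.l + 1)) → 𝔱 → ℤ) :=
  AddSubgroup.closure {c | ∃ I x, I.card = p + 1 ∧ x ∈ S.VIset ξ I ∧
    (S.lenPt ξ x : ℤ) ≤ N ∧ c = single I (SkOrb (S.WIB I) x)}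

/-- The homotopy operator `h_i`, defined on basis elements by `h_i β_I(x) = 0` if
`i ∈ I` and `h_i β_I(x) = (-1)^{#{j ∈ I : j < i}} β_{I∪{i}}(x)` if `i ∉ I` (the
coefficient of `β_I(x)`, `x ∈ V^I`, in an anti-invariant `φ` is `φ(x)`). -/
def hBmap [TopologicalSpace 𝔱] (ξ : 𝔱) (i : Fin (S.l + 1))
    (c : Finset (Fin (S.l + 1)) → 𝔱 → ℤ) : Finset (Fin (S.l + 1)) → 𝔱 → ℤ := fun K y =>
  if i ∈ K then
    ∑ᶠ x : S.VIset ξ (K.erase i),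
      (-1 : ℤ) ^ ((K.erase i).filter (fun j => j < i)).card * c (K.erase i) (x : 𝔱) *
        SkOrb (S.WIB K) (x : 𝔱) y
  else 0

/-- `A_i = id - h_i ∂ - ∂ h_i`. -/
def AiB [TopologicalSpace 𝔱] (ξ : 𝔱)
    (Srep : Finset (Fin (S.l + 1)) → Finset (Fin (S.l + 1)) → Finset (𝔱 ≃ᵃ[ℝ] 𝔱))
    (i : Fin (S.l + 1)) (c : Finset (Fin (S.l + 1)) → 𝔱 → ℤ) :
    Finset (Fin (S.l + 1)) → 𝔱 → ℤ :=
  c - S.hBmap ξ i (bdGen Srep c) - bdGen Srep (S.hBmap ξ i c)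

/-- `A = A_0 ∘ A_1 ∘ ⋯ ∘ A_l`. -/
def Acomp [TopologicalSpace 𝔱] (ξ : 𝔱)
    (Srep : Finset (Fin (S.l + 1)) → Finset (Fin (S.l + 1)) → Finset (𝔱 ≃ᵃ[ℝ] 𝔱))
    (c : Finset (Fin (S.l + 1)) → 𝔱 → ℤ) : Finset (Fin (S.l + 1)) → 𝔱 → ℤ :=
  (List.finRange (S.l + 1)).foldr (fun i d => S.AiB ξ Srep i d) c

end RSD

end CCQ

namespace CCQ

namespace RSD

section Aux

variable {𝔱 : Type*} [NormedAddCommGroup 𝔱] [InnerProductSpace ℝ 𝔱] (S : RSD 𝔱)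

lemma root_ne_zero {β : Module.Dual ℝ 𝔱} (hβ : β ∈ S.R) : β ≠ 0 := by
  intro h
  have h2 := S.pair_self β hβ
  rw [h] at h2
  simp at h2

lemma neg_mem {β : Module.Dual ℝ 𝔱} (hβ : β ∈ S.R) : -β ∈ S.R := by
  have h := S.reflect_mem β hβ β hβ
  rw [S.pair_self β hβ] at h
  have h2 : β - (2 : ℝ) • β = -β := by module
  rwa [h2] at h

lemma sum_ite_smul {ι : Type*} [Fintype ι] [DecidableEq ι]
    (v : ι → Module.Dual ℝ 𝔱) (j : ι) (t : ℝ) :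
    ∑ i, (if i = j then t else 0) • v i = t • v j := by
  simp [ite_smul]

lemma coord_unique {d e : Fin S.l → ℝ}
    (h : ∑ i, d i • S.α i.succ = ∑ i, e i • S.α i.succ) : d = e := by
  have h2 : ∑ i, (d i - e i) • S.α i.succ = 0 := by
    have h1 : ∑ i, (d i - e i) • S.α i.succ
        = (∑ i, d i • S.α i.succ) - ∑ i, e i • S.α i.succ := by
      rw [← Finset.sum_sub_distrib]
      exact Finset.sum_congr rfl fun i _ => by module
    rw [h1, h, sub_self]
  have h3 := Fintype.linearIndependent_iff.mp S.indep (fun i => d i - e i) h2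
  funext i
  have := h3 i
  linarith

/-- Coordinates of an element of the span of the simple roots. -/
def cf (β : Module.Dual ℝ 𝔱) : Fin S.l → ℝ :=
  if h : ∃ d : Fin S.l → ℝ, β = ∑ i, d i • S.α i.succ then h.choose else 0

lemma cf_eq {β : Module.Dual ℝ 𝔱} {d : Fin S.l → ℝ}
    (h : β = ∑ i, d i • S.α i.succ) : S.cf β = d := by
  have hex : ∃ d : Fin S.l → ℝ, β = ∑ i, d i • S.α i.succ := ⟨d, h⟩
  rw [cf, dif_pos hex]
  exact S.coord_unique (hex.choose_spec.symm.trans h)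

lemma exists_rep {β : Module.Dual ℝ 𝔱} (hβ : β ∈ S.R) :
    ∃ d : Fin S.l → ℝ, β = ∑ i, d i • S.α i.succ := by
  rcases S.base β hβ with ⟨c, hc⟩ | ⟨c, hc⟩
  · exact ⟨fun i => (c i : ℝ), hc⟩
  · refine ⟨fun i => -(c i : ℝ), ?_⟩
    rw [hc, ← Finset.sum_neg_distrib]
    exact Finset.sum_congr rfl fun i _ => (neg_smul _ _).symm

lemma cf_spec {β : Module.Dual ℝ 𝔱} (hβ : β ∈ S.R) :
    β = ∑ i, S.cf β i • S.α i.succ := by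
  obtain ⟨d, hd⟩ := S.exists_rep hβ
  rw [S.cf_eq hd]
  exact hd

lemma cf_sign {β : Module.Dual ℝ 𝔱} (hβ : β ∈ S.R) :
    (∀ j, 0 ≤ S.cf β j) ∨ (∀ j, S.cf β j ≤ 0) := by
  rcases S.base β hβ with ⟨c, hc⟩ | ⟨c, hc⟩
  · left
    rw [S.cf_eq hc]
    intro j
    positivity
  · right
    have h2 : β = ∑ i, (-(c i : ℝ)) • S.α i.succ := by
      rw [hc, ← Finset.sum_neg_distrib]
      exact Finset.sum_congr rfl fun i _ => (neg_smul _ _).symm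
    rw [S.cf_eq h2]
    intro j
    simp

lemma cf_exists_ne {β : Module.Dual ℝ 𝔱} (hβ : β ∈ S.R) : ∃ j, S.cf β j ≠ 0 := by
  by_contra h
  push_neg at h
  apply S.root_ne_zero hβ
  have h2 := S.cf_spec hβ
  rw [h2]
  apply Finset.sum_eq_zero
  intro i _
  rw [h i, zero_smul]

lemma theta_mem : S.theta ∈ S.R := S.neg_mem (S.α_mem 0)

/-- The marks: coordinates of the highest root. -/
def mk' : Fin S.l → ℝ := S.cf S.theta

lemma theta_eq : S.theta = ∑ i, S.mk' i • S.α i.succ := S.cf_spec S.theta_mem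

lemma mk'_ge_one (j : Fin S.l) : 1 ≤ S.mk' j := by
  obtain ⟨e, he⟩ := S.highest (S.α j.succ) (S.α_mem j.succ)
  have hθ : S.theta = ∑ i, ((e i : ℝ) + if i = j then 1 else 0) • S.α i.succ := by
    have h1 : S.theta - S.α j.succ = ∑ i, (e i : ℝ) • S.α i.succ := he
    have h2 : S.α j.succ = ∑ i, (if i = j then (1:ℝ) else 0) • S.α i.succ := by
      rw [sum_ite_smul (fun i => S.α i.succ) j (1:ℝ), one_smul]
    calc S.theta = (S.theta - S.α j.succ) + S.α j.succ := by abel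
    _ = ∑ i, ((e i : ℝ) + if i = j then 1 else 0) • S.α i.succ := by
        rw [h1]
        conv_lhs => rw [h2]
        rw [← Finset.sum_add_distrib]
        exact Finset.sum_congr rfl fun i _ => by module
  have h3 := S.cf_eq hθ
  have h4 : S.mk' j = (e j : ℝ) + 1 := by
    rw [mk', h3]
    simp
  rw [h4]
  have h5 : (0:ℝ) ≤ (e j : ℝ) := by positivity
  linarith

lemma cf_neg {β : Module.Dual ℝ 𝔱} (hβ : β ∈ S.R) :
    S.cf (-β) = fun j => -S.cf β j := by
  apply S.cf_eq
  conv_lhs => rw [S.cf_spec hβ]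
  rw [← Finset.sum_neg_distrib]
  exact Finset.sum_congr rfl fun i _ => by module

lemma cf_le_mk' {β : Module.Dual ℝ 𝔱} (hβ : β ∈ S.R) (j : Fin S.l) :
    S.cf β j ≤ S.mk' j := by
  obtain ⟨e, he⟩ := S.highest β hβ
  have hb : β = ∑ i, (S.mk' i - (e i : ℝ)) • S.α i.succ := by
    have h1 : S.theta - β = ∑ i, (e i : ℝ) • S.α i.succ := he
    calc β = S.theta - (S.theta - β) := by abel
    _ = ∑ i, (S.mk' i - (e i : ℝ)) • S.α i.succ := by
        rw [h1]
        conv_lhs => rw [S.theta_eq]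
        rw [← Finset.sum_sub_distrib]
        exact Finset.sum_congr rfl fun i _ => by module
  rw [S.cf_eq hb]
  show S.mk' j - (e j : ℝ) ≤ S.mk' j
  have h5 : (0:ℝ) ≤ (e j : ℝ) := by positivity
  linarith

lemma neg_mk'_le_cf {β : Module.Dual ℝ 𝔱} (hβ : β ∈ S.R) (j : Fin S.l) :
    -S.mk' j ≤ S.cf β j := by
  have h := S.cf_le_mk' (S.neg_mem hβ) j
  rw [S.cf_neg hβ] at h
  dsimp at h
  linarith

lemma mem_posRoots_iff {β : Module.Dual ℝ 𝔱} (hβ : β ∈ S.R) :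
    β ∈ S.posRoots ↔ ∀ j, 0 ≤ S.cf β j := by
  constructor
  · intro hm j
    rw [posRoots, Finset.mem_filter] at hm
    obtain ⟨-, c, hc⟩ := hm
    rw [S.cf_eq hc]
    positivity
  · intro h
    rw [posRoots, Finset.mem_filter]
    refine ⟨S.finR.mem_toFinset.mpr hβ, ?_⟩
    rcases S.base β hβ with h1 | ⟨c, hc⟩
    · exact h1
    · exfalso
      have h2 : β = ∑ i, (-(c i : ℝ)) • S.α i.succ := by
        rw [hc, ← Finset.sum_neg_distrib]
        exact Finset.sum_congr rfl fun i _ => (neg_smul _ _).symm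
      have h3 := S.cf_eq h2
      apply S.root_ne_zero hβ
      rw [h2]
      apply Finset.sum_eq_zero
      intro i _
      have h4 := h i
      rw [h3] at h4
      dsimp at h4
      have : (c i : ℝ) = 0 := by
        have : (0:ℝ) ≤ (c i : ℝ) := by positivity
        linarith
      rw [this, neg_zero, zero_smul]

lemma alpha_succ_posRoot (i : Fin S.l) : S.α i.succ ∈ S.posRoots := by
  rw [posRoots, Finset.mem_filter]
  refine ⟨S.finR.mem_toFinset.mpr (S.α_mem i.succ), fun k => if k = i then 1 else 0, ?_⟩
  have h1 : ∀ k, (((if k = i then 1 else 0 : ℕ)) : ℝ) = if k = i then (1:ℝ) else 0 := by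
    intro k; split <;> simp
  calc S.α i.succ = ∑ k, (if k = i then (1:ℝ) else 0) • S.α k.succ := by
        rw [sum_ite_smul (fun k => S.α k.succ) i (1:ℝ), one_smul]
  _ = ∑ k, (((if k = i then 1 else 0 : ℕ)) : ℝ) • S.α k.succ :=
        Finset.sum_congr rfl fun k _ => by rw [h1]

lemma cf_alpha_succ (i : Fin S.l) :
    S.cf (S.α i.succ) = fun k => if k = i then 1 else 0 := by
  apply S.cf_eq
  rw [sum_ite_smul (fun k => S.α k.succ) i (1:ℝ), one_smul]

section InnerLemmas

variable (hBinv : ∀ β ∈ S.R, ∀ x y : 𝔱,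
    ⟪x - β x • S.coroot β, y - β y • S.coroot β⟫_ℝ = ⟪x, y⟫_ℝ)

lemma coroot_ne_zero {β : Module.Dual ℝ 𝔱} (hβ : β ∈ S.R) : S.coroot β ≠ 0 := by
  intro h
  have h2 := S.pair_self β hβ
  rw [h] at h2
  simp at h2

lemma coroot_norm_pos {β : Module.Dual ℝ 𝔱} (hβ : β ∈ S.R) :
    0 < ⟪S.coroot β, S.coroot β⟫_ℝ := by
  rcases lt_or_eq_of_le (real_inner_self_nonneg (x := S.coroot β)) with h | h
  · exact h
  · exfalso
    exact S.coroot_ne_zero hβ (inner_self_eq_zero.mp h.symm)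

include hBinv in
lemma Bform {β : Module.Dual ℝ 𝔱} (hβ : β ∈ S.R) (x : 𝔱) :
    β x * ⟪S.coroot β, S.coroot β⟫_ℝ = 2 * ⟪x, S.coroot β⟫_ℝ := by
  have h := hBinv β hβ x (S.coroot β)
  rw [S.pair_self β hβ] at h
  have h2 : S.coroot β - (2:ℝ) • S.coroot β = -S.coroot β := by module
  rw [h2, inner_neg_right, inner_sub_left, real_inner_smul_left] at h
  linarith

include hBinv in
lemma coroot_neg {β : Module.Dual ℝ 𝔱} (hβ : β ∈ S.R) :
    S.coroot (-β) = -S.coroot β := by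
  have hβ' := S.neg_mem hβ
  set v := S.coroot β with hv
  set v' := S.coroot (-β) with hv'
  have ht : 0 < ⟪v, v⟫_ℝ := S.coroot_norm_pos hβ
  have ht' : 0 < ⟪v', v'⟫_ℝ := S.coroot_norm_pos hβ'
  have key : ∀ x : 𝔱, ⟪x, ⟪v, v⟫_ℝ • v' + ⟪v', v'⟫_ℝ • v⟫_ℝ = 0 := by
    intro x
    have h1 := S.Bform hBinv hβ x
    have h2 := S.Bform hBinv hβ' x
    have h3 : (-β) x = -(β x) := rfl
    rw [h3] at h2
    rw [inner_add_right, real_inner_smul_right, real_inner_smul_right]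
    nlinarith [h1, h2]
  have hz : ⟪v, v⟫_ℝ • v' + ⟪v', v'⟫_ℝ • v = 0 := by
    have := key (⟪v, v⟫_ℝ • v' + ⟪v', v'⟫_ℝ • v)
    exact inner_self_eq_zero.mp this
  -- from hz : t • v' = -t' • v
  have hveq : ⟪v, v⟫_ℝ • v' = -(⟪v', v'⟫_ℝ • v) := by
    rw [← add_eq_zero_iff_eq_neg]
    exact hz
  have hnorm : ⟪v, v⟫_ℝ ^ 2 * ⟪v', v'⟫_ℝ = ⟪v', v'⟫_ℝ ^ 2 * ⟪v, v⟫_ℝ := by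
    have h1 : ⟪⟪v, v⟫_ℝ • v', ⟪v, v⟫_ℝ • v'⟫_ℝ = ⟪-(⟪v', v'⟫_ℝ • v), -(⟪v', v'⟫_ℝ • v)⟫_ℝ := by
      rw [hveq]
    rw [inner_neg_neg] at h1
    rw [real_inner_smul_left, real_inner_smul_right, real_inner_smul_left,
      real_inner_smul_right] at h1
    nlinarith [h1]
  have hprod : 0 < ⟪v, v⟫_ℝ * ⟪v', v'⟫_ℝ := mul_pos ht ht'
  have htt : ⟪v, v⟫_ℝ = ⟪v', v'⟫_ℝ := by
    have h6 : ⟪v, v⟫_ℝ * (⟪v, v⟫_ℝ * ⟪v', v'⟫_ℝ)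
        = ⟪v', v'⟫_ℝ * (⟪v, v⟫_ℝ * ⟪v', v'⟫_ℝ) := by linear_combination hnorm
    exact mul_right_cancel₀ (ne_of_gt hprod) h6
  have h4 : ⟪v, v⟫_ℝ • v' = ⟪v, v⟫_ℝ • (-v) := by
    rw [hveq, htt]
    module
  have h5 := smul_right_injective 𝔱 (ne_of_gt ht) h4
  exact h5

include hBinv in
lemma pair_sign {β γ : Module.Dual ℝ 𝔱} (hβ : β ∈ S.R) (hγ : γ ∈ S.R)
    (h : 0 ≤ β (S.coroot γ)) : 0 ≤ γ (S.coroot β) := by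
  have h1 := S.Bform hBinv hγ (S.coroot β)
  have h2 := S.Bform hBinv hβ (S.coroot γ)
  have h3 : ⟪S.coroot β, S.coroot γ⟫_ℝ = ⟪S.coroot γ, S.coroot β⟫_ℝ := real_inner_comm _ _
  have ht := S.coroot_norm_pos hβ
  have ht' := S.coroot_norm_pos hγ
  nlinarith [h1, h2, h3, ht, ht', h]

lemma theta_pair_nonneg {β : Module.Dual ℝ 𝔱} (hβp : β ∈ S.posRoots) :
    0 ≤ S.theta (S.coroot β) := by
  have hβ : β ∈ S.R := by
    rw [posRoots, Finset.mem_filter] at hβp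
    exact S.finR.mem_toFinset.mp hβp.1
  by_contra hm
  push_neg at hm
  set m := S.theta (S.coroot β) with hmdef
  have hγ : S.theta - m • β ∈ S.R := S.reflect_mem β hβ S.theta S.theta_mem
  obtain ⟨e, he⟩ := S.highest _ hγ
  -- θ - (θ - m•β) = m•β = ∑ e
  have h1 : m • β = ∑ i, (e i : ℝ) • S.α i.succ := by
    have : S.theta - (S.theta - m • β) = m • β := by abel
    rw [← this]
    exact he
  have h2 : m • β = ∑ i, (m * S.cf β i) • S.α i.succ := by
    conv_lhs => rw [S.cf_spec hβ]
    rw [Finset.smul_sum]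
    exact Finset.sum_congr rfl fun i _ => by module
  have h3 : (fun i => m * S.cf β i) = fun i => (e i : ℝ) := by
    apply S.coord_unique
    rw [← h2, ← h1]
  obtain ⟨j, hj⟩ := S.cf_exists_ne hβ
  have hj0 : 0 ≤ S.cf β j := (S.mem_posRoots_iff hβ).mp hβp j
  have hjpos : 0 < S.cf β j := lt_of_le_of_ne hj0 (Ne.symm hj)
  have h4 : m * S.cf β j = (e j : ℝ) := congrFun h3 j
  have h5 : (0:ℝ) ≤ (e j : ℝ) := by positivity
  nlinarith

include hBinv in
lemma pair_theta_nonneg {β : Module.Dual ℝ 𝔱} (hβp : β ∈ S.posRoots) :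
    0 ≤ β (S.coroot S.theta) := by
  have hβ : β ∈ S.R := by
    rw [posRoots, Finset.mem_filter] at hβp
    exact S.finR.mem_toFinset.mp hβp.1
  exact S.pair_sign hBinv S.theta_mem hβ (S.theta_pair_nonneg hβp)

lemma theta_posRoot : S.theta ∈ S.posRoots := by
  rw [S.mem_posRoots_iff S.theta_mem]
  intro j
  have := S.mk'_ge_one j
  rw [mk'] at this
  linarith

lemma pair_theta_le_one {β : Module.Dual ℝ 𝔱} (hβp : β ∈ S.posRoots)
    (hne : β ≠ S.theta) : β (S.coroot S.theta) ≤ 1 := by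
  have hβ : β ∈ S.R := by
    rw [posRoots, Finset.mem_filter] at hβp
    exact S.finR.mem_toFinset.mp hβp.1
  by_contra hm
  push_neg at hm
  obtain ⟨n, hn⟩ := S.cryst S.theta S.theta_mem β hβ
  have hn2 : (2:ℤ) ≤ n := by
    have : (1:ℝ) < (n:ℝ) := by rw [← hn]; exact hm
    exact_mod_cast this
  have hγ : β - β (S.coroot S.theta) • S.theta ∈ S.R :=
    S.reflect_mem S.theta S.theta_mem β hβ
  have hγcf : S.cf (β - β (S.coroot S.theta) • S.theta)
      = fun j => S.cf β j - (n : ℝ) * S.mk' j := by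
    apply S.cf_eq
    rw [hn]
    conv_lhs => rw [S.cf_spec hβ, S.theta_eq]
    rw [Finset.smul_sum, ← Finset.sum_sub_distrib]
    exact Finset.sum_congr rfl fun i _ => by module
  have hall : ∀ j, S.cf β j = S.mk' j := by
    intro j
    have h1 := S.neg_mk'_le_cf hγ j
    rw [hγcf] at h1
    have h1' : -S.mk' j ≤ S.cf β j - (n:ℝ) * S.mk' j := h1
    have h2 := S.cf_le_mk' hβ j
    have h3 := S.mk'_ge_one j
    have hn2' : (2:ℝ) ≤ (n:ℝ) := by exact_mod_cast hn2
    nlinarith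
  apply hne
  rw [S.cf_spec hβ, S.theta_eq]
  exact Finset.sum_congr rfl fun i _ => by rw [hall i]

include hBinv in
lemma obtuse {i j : Fin (S.l + 1)} (hne : j ≠ i) :
    S.α j (S.coroot (S.α i)) ≤ 0 := by
  rcases Fin.eq_zero_or_eq_succ i with rfl | ⟨i', rfl⟩
  · -- i = 0 : α_j (coroot α_0) = -(α_j (coroot θ)) ≤ 0
    have h0 : S.α 0 = -S.theta := by rw [theta, neg_neg]
    rw [h0, S.coroot_neg hBinv S.theta_mem]
    rcases Fin.eq_zero_or_eq_succ j with rfl | ⟨j', rfl⟩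
    · exact absurd rfl hne
    · have h1 := S.pair_theta_nonneg hBinv (S.alpha_succ_posRoot j')
      have h2 : S.α j'.succ (-S.coroot S.theta) = -(S.α j'.succ (S.coroot S.theta)) :=
        map_neg _ _
      rw [h2]
      linarith
  · rcases Fin.eq_zero_or_eq_succ j with rfl | ⟨j', rfl⟩
    · -- j = 0 : (-θ)(coroot α_i) ≤ 0
      have h0 : S.α 0 = -S.theta := by rw [theta, neg_neg]
      rw [h0]
      have h1 : 0 ≤ S.theta (S.coroot (S.α i'.succ)) := by
        apply S.pair_sign hBinv (S.α_mem i'.succ) S.theta_mem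
          (S.pair_theta_nonneg hBinv (S.alpha_succ_posRoot i'))
      have h2 : (-S.theta) (S.coroot (S.α i'.succ))
          = -(S.theta (S.coroot (S.α i'.succ))) := rfl
      rw [h2]
      linarith
    · -- both successors
      by_contra hc
      push_neg at hc
      set c := S.α j'.succ (S.coroot (S.α i'.succ)) with hcdef
      have hγ : S.α j'.succ - c • S.α i'.succ ∈ S.R :=
        S.reflect_mem (S.α i'.succ) (S.α_mem i'.succ) (S.α j'.succ) (S.α_mem j'.succ)
      have hji : j' ≠ i' := by
        intro h
        exact hne (by rw [h])
      have hγcf : S.cf (S.α j'.succ - c • S.α i'.succ)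
          = fun k => (if k = j' then 1 else 0) - c * (if k = i' then 1 else 0) := by
        apply S.cf_eq
        have h1 : S.α j'.succ = ∑ k, (if k = j' then (1:ℝ) else 0) • S.α k.succ := by
          rw [sum_ite_smul (fun k => S.α k.succ) j' (1:ℝ), one_smul]
        have h2 : S.α i'.succ = ∑ k, (if k = i' then (1:ℝ) else 0) • S.α k.succ := by
          rw [sum_ite_smul (fun k => S.α k.succ) i' (1:ℝ), one_smul]
        conv_lhs => rw [h1, h2]
        rw [Finset.smul_sum, ← Finset.sum_sub_distrib]
        exact Finset.sum_congr rfl fun k _ => by module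
      rcases S.cf_sign hγ with hpos | hneg
      · have h := hpos i'
        rw [hγcf] at h
        simp only [if_neg (Ne.symm hji), if_pos rfl] at h
        have h' : (0:ℝ) ≤ 0 - c * 1 := h
        nlinarith
      · have h := hneg j'
        rw [hγcf] at h
        simp only [if_pos rfl, if_neg hji] at h
        have h' : (1:ℝ) - c * 0 ≤ 0 := h
        nlinarith

end InnerLemmas

section MainLemmas

lemma apply_sum (c : Fin (S.l + 1) → ℝ) (x : 𝔱) :
    (∑ k, c k • S.α k) x = ∑ k, c k * S.α k x := by
  rw [LinearMap.sum_apply]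
  exact Finset.sum_congr rfl fun k _ => by rw [LinearMap.smul_apply, smul_eq_mul]

lemma cf_of_rep {β : Module.Dual ℝ 𝔱} (c : Fin (S.l + 1) → ℝ)
    (h : β = ∑ k, c k • S.α k) :
    S.cf β = fun j => c j.succ - c 0 * S.mk' j := by
  apply S.cf_eq
  rw [h, Fin.sum_univ_succ]
  have h0 : S.α 0 = -S.theta := by rw [theta, neg_neg]
  rw [h0, S.theta_eq, smul_neg, Finset.smul_sum, ← Finset.sum_neg_distrib,
    ← Finset.sum_add_distrib]
  exact Finset.sum_congr rfl fun j _ => by module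

lemma posRootsI_mem_R {I : Finset (Fin (S.l + 1))} {β : Module.Dual ℝ 𝔱}
    (h : β ∈ S.posRootsI I) : β ∈ S.R := by
  rw [posRootsI, Finset.mem_filter] at h
  exact S.finR.mem_toFinset.mp h.1

lemma mem_posRootsI_elim {I : Finset (Fin (S.l + 1))} {β : Module.Dual ℝ 𝔱}
    (h : β ∈ S.posRootsI I) :
    ∃ c : Fin (S.l + 1) → ℕ, (∀ k ∈ I, c k = 0) ∧ β = ∑ k, (c k : ℝ) • S.α k := by
  rw [posRootsI, Finset.mem_filter] at h
  exact h.2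

lemma mem_posRootsI_of {I : Finset (Fin (S.l + 1))} {β : Module.Dual ℝ 𝔱}
    (hβ : β ∈ S.R) (c : Fin (S.l + 1) → ℝ)
    (hInt : ∀ k, ∃ n : ℤ, c k = (n : ℝ)) (hIz : ∀ k ∈ I, c k = 0)
    (hnn : ∀ k, 0 ≤ c k) (h : β = ∑ k, c k • S.α k) : β ∈ S.posRootsI I := by
  rw [posRootsI, Finset.mem_filter]
  refine ⟨S.finR.mem_toFinset.mpr hβ, ?_⟩
  choose n hn using hInt
  have hcast : ∀ k, (((n k).toNat : ℕ) : ℝ) = c k := by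
    intro k
    have h2 : (0 : ℤ) ≤ n k := by
      have : (0:ℝ) ≤ ((n k : ℤ) : ℝ) := by rw [← hn k]; exact hnn k
      exact_mod_cast this
    rw [hn k]
    exact_mod_cast congrArg (fun m : ℤ => (m : ℝ)) (Int.toNat_of_nonneg h2)
  refine ⟨fun k => (n k).toNat, fun k hk => ?_, ?_⟩
  · have h1 : c k = 0 := hIz k hk
    have h2 := hcast k
    rw [h1] at h2
    exact_mod_cast h2
  · rw [h]
    exact Finset.sum_congr rfl fun k _ => by rw [hcast k]

lemma exists_pos_coord_ne {i : Fin (S.l + 1)}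
    {β : Module.Dual ℝ 𝔱} (hβR : β ∈ S.R) (hne : β ≠ S.α i)
    (c : Fin (S.l + 1) → ℕ) (hcrep : β = ∑ k, (c k : ℝ) • S.α k) :
    ∃ j, j ≠ i ∧ 0 < c j := by
  by_contra h
  push_neg at h
  have hz : ∀ j, j ≠ i → c j = 0 := fun j hj => Nat.le_zero.mp (h j hj)
  have hb : β = (c i : ℝ) • S.α i := by
    rw [hcrep, Finset.sum_eq_single i]
    · intro b _ hb
      rw [hz b hb]
      simp
    · intro hb
      exact absurd (Finset.mem_univ i) hb
  have hmem : (c i : ℝ) • S.α i ∈ S.R := by rw [← hb]; exact hβR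
  rcases S.reduced (S.α i) (S.α_mem i) ((c i : ℝ)) hmem with h1 | h1
  · exact hne (by rw [hb, h1, one_smul])
  · have h2 : (0:ℝ) ≤ (c i : ℝ) := by positivity
    rw [h1] at h2
    linarith

lemma closureI (hBinv : ∀ β ∈ S.R, ∀ x y : 𝔱,
      ⟪x - β x • S.coroot β, y - β y • S.coroot β⟫_ℝ = ⟪x, y⟫_ℝ)
    {I : Finset (Fin (S.l + 1))} (hI : I.Nonempty) {i : Fin (S.l + 1)}
    (hi : i ∉ I) {β : Module.Dual ℝ 𝔱} (hβ : β ∈ S.posRootsI I) (hne : β ≠ S.α i) :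
    β - β (S.coroot (S.α i)) • S.α i ∈ S.posRootsI I := by
  have hβR : β ∈ S.R := S.posRootsI_mem_R hβ
  obtain ⟨c, hcI, hcrep⟩ := S.mem_posRootsI_elim hβ
  obtain ⟨n, hn⟩ := S.cryst (S.α i) (S.α_mem i) β hβR
  have hγR : β - β (S.coroot (S.α i)) • S.α i ∈ S.R :=
    S.reflect_mem (S.α i) (S.α_mem i) β hβR
  have hγrep : β - β (S.coroot (S.α i)) • S.α i
      = ∑ k, ((c k : ℝ) - if k = i then (n : ℝ) else 0) • S.α k := by
    rw [hn, hcrep]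
    have hs : (n : ℝ) • S.α i = ∑ k, (if k = i then (n : ℝ) else 0) • S.α k :=
      (sum_ite_smul S.α i (n : ℝ)).symm
    rw [hs, ← Finset.sum_sub_distrib]
    exact Finset.sum_congr rfl fun k _ => by module
  suffices hin : (n : ℝ) ≤ (c i : ℝ) by
    apply S.mem_posRootsI_of hγR (fun k => (c k : ℝ) - if k = i then (n : ℝ) else 0)
    · intro k
      refine ⟨(c k : ℤ) - if k = i then n else 0, ?_⟩
      split <;> push_cast <;> ring
    · intro k hk
      have h1 : c k = 0 := hcI k hk
      have h2 : k ≠ i := fun h => hi (h ▸ hk)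
      rw [if_neg h2, h1]
      simp
    · intro k
      rcases eq_or_ne k i with rfl | hk
      · rw [if_pos rfl]
        linarith
      · rw [if_neg hk]
        have : (0:ℝ) ≤ (c k : ℝ) := by positivity
        linarith
    · exact hγrep
  have hcf := S.cf_of_rep (fun k => (c k : ℝ)) hcrep
  rcases Fin.eq_zero_or_eq_succ i with rfl | ⟨i', rfl⟩
  · -- i = 0
    obtain ⟨j₀, hj₀I⟩ := hI
    have hj₀0 : j₀ ≠ 0 := fun h => hi (h ▸ hj₀I)
    obtain ⟨j₀', hj₀eq⟩ := Fin.eq_succ_of_ne_zero hj₀0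
    have hcj₀ : c j₀'.succ = 0 := by rw [← hj₀eq]; exact hcI j₀ hj₀I
    have hc0le : (c 0 : ℝ) ≤ 1 := by
      have h1 := S.neg_mk'_le_cf hβR j₀'
      rw [hcf] at h1
      have h1' : -S.mk' j₀' ≤ (c j₀'.succ : ℝ) - (c 0 : ℝ) * S.mk' j₀' := h1
      have h3 := S.mk'_ge_one j₀'
      rw [hcj₀] at h1'
      push_cast at h1'
      nlinarith
    have hcor : S.coroot (S.α 0) = -S.coroot S.theta := by
      rw [show S.α 0 = -S.theta from by rw [theta, neg_neg]]
      exact S.coroot_neg hBinv S.theta_mem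
    by_cases hc0 : c 0 = 0
    · have hβpos : β ∈ S.posRoots := by
        rw [S.mem_posRoots_iff hβR]
        intro j
        rw [hcf]
        show 0 ≤ (c j.succ : ℝ) - (c 0 : ℝ) * S.mk' j
        have h2 : (0:ℝ) ≤ (c j.succ : ℝ) := by positivity
        have h3 : (c 0 : ℝ) = 0 := by exact_mod_cast hc0
        rw [h3]
        linarith
      have hθpair := S.pair_theta_nonneg hBinv hβpos
      have hnneg : (n : ℝ) ≤ 0 := by
        rw [← hn, hcor, map_neg]
        linarith
      have : (0:ℝ) ≤ (c 0 : ℝ) := by positivity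
      linarith
    · have hc01 : (c 0 : ℝ) = 1 := by
        have h1 : 1 ≤ c 0 := Nat.one_le_iff_ne_zero.mpr hc0
        have h1' : (1:ℝ) ≤ (c 0 : ℝ) := by exact_mod_cast h1
        linarith
      have hsign : ∀ j, S.cf β j ≤ 0 := by
        rcases S.cf_sign hβR with hpos | hneg
        · exfalso
          have h1 := hpos j₀'
          rw [hcf] at h1
          have h1' : 0 ≤ (c j₀'.succ : ℝ) - (c 0 : ℝ) * S.mk' j₀' := h1
          have h3 := S.mk'_ge_one j₀'
          rw [hcj₀, hc01] at h1'
          push_cast at h1'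
          linarith
        · exact hneg
      have hnegpos : -β ∈ S.posRoots := by
        rw [S.mem_posRoots_iff (S.neg_mem hβR)]
        intro j
        rw [S.cf_neg hβR]
        have := hsign j
        dsimp only
        linarith
      have hneθ : -β ≠ S.theta := by
        intro h
        apply hne
        rw [show S.α 0 = -S.theta from by rw [theta, neg_neg], ← h, neg_neg]
      have hle1 := S.pair_theta_le_one hnegpos hneθ
      have hβθ : (-β) (S.coroot S.theta) = -(β (S.coroot S.theta)) := rfl
      have hn1 : (n : ℝ) ≤ 1 := by
        rw [← hn, hcor, map_neg]
        rw [hβθ] at hle1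
        linarith
      rw [hc01]
      linarith
  · -- i = i'.succ
    have hγcf := S.cf_of_rep
      (fun k => (c k : ℝ) - if k = i'.succ then (n : ℝ) else 0) hγrep
    have h0succ : (0 : Fin (S.l + 1)) ≠ i'.succ := Ne.symm (Fin.succ_ne_zero i')
    by_cases hc0 : c 0 = 0
    · obtain ⟨j, hji, hjpos⟩ := S.exists_pos_coord_ne hβR hne c hcrep
      have hj0 : j ≠ 0 := by
        intro h
        rw [h] at hjpos
        omega
      obtain ⟨j', rfl⟩ := Fin.eq_succ_of_ne_zero hj0
      rcases S.cf_sign hγR with hpos | hneg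
      · have h1 := hpos i'
        rw [hγcf] at h1
        have h1' : 0 ≤ ((c i'.succ : ℝ) - if i'.succ = i'.succ then (n:ℝ) else 0)
            - ((c 0 : ℝ) - if (0 : Fin (S.l+1)) = i'.succ then (n:ℝ) else 0) * S.mk' i' := h1
        rw [if_pos rfl, if_neg h0succ, hc0] at h1'
        push_cast at h1'
        linarith
      · exfalso
        have h1 := hneg j'
        rw [hγcf] at h1
        have h1' : ((c j'.succ : ℝ) - if j'.succ = i'.succ then (n:ℝ) else 0)
            - ((c 0 : ℝ) - if (0 : Fin (S.l+1)) = i'.succ then (n:ℝ) else 0) * S.mk' j' ≤ 0 := h1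
        rw [if_neg hji, if_neg h0succ, hc0] at h1'
        push_cast at h1'
        have : (1:ℝ) ≤ (c j'.succ : ℝ) := by exact_mod_cast hjpos
        linarith
    · -- c 0 = 1 via bound
      obtain ⟨j₀, hj₀I⟩ := hI
      have h0I : (0 : Fin (S.l+1)) ∉ I := fun h => hc0 (hcI 0 h)
      have hj₀0 : j₀ ≠ 0 := fun h => h0I (h ▸ hj₀I)
      obtain ⟨j₀', hj₀eq⟩ := Fin.eq_succ_of_ne_zero hj₀0
      have hcj₀ : c j₀'.succ = 0 := by rw [← hj₀eq]; exact hcI j₀ hj₀I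
      have hc0le : (c 0 : ℝ) ≤ 1 := by
        have h1 := S.neg_mk'_le_cf hβR j₀'
        rw [hcf] at h1
        have h1' : -S.mk' j₀' ≤ (c j₀'.succ : ℝ) - (c 0 : ℝ) * S.mk' j₀' := h1
        have h3 := S.mk'_ge_one j₀'
        rw [hcj₀] at h1'
        push_cast at h1'
        nlinarith
      have hc01 : (c 0 : ℝ) = 1 := by
        have h1 : 1 ≤ c 0 := Nat.one_le_iff_ne_zero.mpr hc0
        have h1' : (1:ℝ) ≤ (c 0 : ℝ) := by exact_mod_cast h1
        linarith
      have h1 := S.cf_le_mk' (S.neg_mem hγR) i'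
      rw [S.cf_neg hγR] at h1
      have h1' : -(S.cf (β - β (S.coroot (S.α i'.succ)) • S.α i'.succ) i') ≤ S.mk' i' := h1
      rw [hγcf] at h1'
      have h1'' : -(((c i'.succ : ℝ) - if i'.succ = i'.succ then (n:ℝ) else 0)
          - ((c 0 : ℝ) - if (0 : Fin (S.l+1)) = i'.succ then (n:ℝ) else 0) * S.mk' i')
          ≤ S.mk' i' := h1'
      rw [if_pos rfl, if_neg h0succ, hc01] at h1''
      push_cast at h1''
      linarith

lemma alpha_mem_posRootsI {I : Finset (Fin (S.l + 1))} {i : Fin (S.l + 1)}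
    (hi : i ∉ I) : S.α i ∈ S.posRootsI I := by
  apply S.mem_posRootsI_of (S.α_mem i) (fun k => if k = i then 1 else 0)
  · intro k
    refine ⟨if k = i then 1 else 0, ?_⟩
    split <;> simp
  · intro k hk
    have hki : k ≠ i := fun h => hi (h ▸ hk)
    rw [if_neg hki]
  · intro k
    split <;> norm_num
  · rw [sum_ite_smul S.α i (1:ℝ), one_smul]

lemma neg_alpha_not_mem_posRootsI {I : Finset (Fin (S.l + 1))}
    (hI : I.Nonempty) {i : Fin (S.l + 1)} (hi : i ∉ I) :
    -S.α i ∉ S.posRootsI I := by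
  intro hmem
  have hR : -S.α i ∈ S.R := S.neg_mem (S.α_mem i)
  obtain ⟨c, hcI, hcrep⟩ := S.mem_posRootsI_elim hmem
  have hcf := S.cf_of_rep (fun k => (c k : ℝ)) hcrep
  obtain ⟨j₀, hj₀I⟩ := hI
  rcases Fin.eq_zero_or_eq_succ i with rfl | ⟨i', rfl⟩
  · have hcfθ : S.cf (-S.α 0) = S.mk' := rfl
    have hj₀0 : j₀ ≠ 0 := fun h => hi (h ▸ hj₀I)
    obtain ⟨j₀', hj₀eq⟩ := Fin.eq_succ_of_ne_zero hj₀0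
    have hcj₀ : c j₀'.succ = 0 := by rw [← hj₀eq]; exact hcI j₀ hj₀I
    have h1 : S.mk' j₀' = (c j₀'.succ : ℝ) - (c 0 : ℝ) * S.mk' j₀' :=
      congrFun (hcfθ.symm.trans hcf) j₀' 
    have h3 := S.mk'_ge_one j₀'
    have h4 : (0:ℝ) ≤ (c 0 : ℝ) := by positivity
    rw [hcj₀] at h1
    push_cast at h1
    nlinarith
  · have hcfa : S.cf (-S.α i'.succ) = fun j => -S.cf (S.α i'.succ) j :=
      S.cf_neg (S.α_mem i'.succ)
    have heq := hcfa.symm.trans hcf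
    have hc00 : (c 0 : ℝ) = 0 := by
      rcases eq_or_ne j₀ 0 with rfl | hj₀0
      · have := hcI 0 hj₀I
        exact_mod_cast this
      · obtain ⟨j₀', hj₀eq⟩ := Fin.eq_succ_of_ne_zero hj₀0
        have hcj₀ : c j₀'.succ = 0 := by rw [← hj₀eq]; exact hcI j₀ hj₀I
        have hj₀i : j₀' ≠ i' := by
          intro h
          apply hi
          rw [← h, ← hj₀eq]
          exact hj₀I
        have h1 := congrFun heq j₀'
        have h1' : -S.cf (S.α i'.succ) j₀' = (c j₀'.succ : ℝ) - (c 0 : ℝ) * S.mk' j₀' := h1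
        rw [S.cf_alpha_succ i'] at h1'
        have h1'' : -(if j₀' = i' then (1:ℝ) else 0)
            = (c j₀'.succ : ℝ) - (c 0 : ℝ) * S.mk' j₀' := h1'
        rw [if_neg hj₀i, hcj₀] at h1''
        push_cast at h1''
        have h3 := S.mk'_ge_one j₀'
        have h4 : (0:ℝ) ≤ (c 0 : ℝ) := by positivity
        nlinarith
    have h5 := congrFun heq i'
    have h5' : -S.cf (S.α i'.succ) i' = (c i'.succ : ℝ) - (c 0 : ℝ) * S.mk' i' := h5
    rw [S.cf_alpha_succ i'] at h5'
    have h5'' : -(if i' = i' then (1:ℝ) else 0)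
        = (c i'.succ : ℝ) - (c 0 : ℝ) * S.mk' i' := h5'
    rw [if_pos rfl, hc00] at h5''
    have h6 : (0:ℝ) ≤ (c i'.succ : ℝ) := by positivity
    linarith

end MainLemmas

section SumLemmas

lemma sum_pair_eq_two (P : Finset (Module.Dual ℝ 𝔱)) (i : Fin (S.l + 1))
    (hmem : S.α i ∈ P) (hneg : -S.α i ∉ P)
    (hcl : ∀ β ∈ P, β ≠ S.α i → β - β (S.coroot (S.α i)) • S.α i ∈ P) :
    ∑ β ∈ P, β (S.coroot (S.α i)) = 2 := by
  classical
  have hpair : S.α i (S.coroot (S.α i)) = 2 := S.pair_self _ (S.α_mem i)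
  have happ : ∀ β : Module.Dual ℝ 𝔱,
      (β - β (S.coroot (S.α i)) • S.α i) (S.coroot (S.α i))
        = β (S.coroot (S.α i)) - β (S.coroot (S.α i)) * 2 := by
    intro β
    rw [LinearMap.sub_apply, LinearMap.smul_apply, smul_eq_mul, hpair]
  have hP : ∑ β ∈ P.erase (S.α i), β (S.coroot (S.α i)) = 0 := by
    refine Finset.sum_involution
      (fun β _ => β - β (S.coroot (S.α i)) • S.α i) ?_ ?_ ?_ ?_
    · intro β _
      rw [happ β]
      ring
    · intro β _ hne0 heq
      have h1 : β (S.coroot (S.α i)) • S.α i = 0 := by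
        have := sub_eq_self.mp heq
        exact this
      rcases smul_eq_zero.mp h1 with h | h
      · exact hne0 h
      · exact S.root_ne_zero (S.α_mem i) h
    · intro β hβe
      rw [Finset.mem_erase] at hβe ⊢
      obtain ⟨hne, hβP⟩ := hβe
      refine ⟨?_, hcl β hβP hne⟩
      intro heq
      have heq' : β - β (S.coroot (S.α i)) • S.α i = S.α i := heq
      have h2 : (β - β (S.coroot (S.α i)) • S.α i) (S.coroot (S.α i)) = 2 := by
        rw [heq', hpair]
      rw [happ β] at h2
      have hβv : β (S.coroot (S.α i)) = -2 := by linarith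
      have h3 : β = -S.α i := by
        have h4 := eq_add_of_sub_eq heq' 
        rw [hβv] at h4
        rw [h4]
        module
      rw [h3] at hβP
      exact hneg hβP
    · intro β hβe
      show (β - β (S.coroot (S.α i)) • S.α i)
          - ((β - β (S.coroot (S.α i)) • S.α i) (S.coroot (S.α i))) • S.α i = β
      rw [happ β]
      module
  have htot : ∑ β ∈ P, β (S.coroot (S.α i))
      = S.α i (S.coroot (S.α i)) + ∑ β ∈ P.erase (S.α i), β (S.coroot (S.α i)) :=
    (Finset.add_sum_erase P (fun β => β (S.coroot (S.α i))) hmem).symm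
  rw [htot, hP, hpair]
  ring

lemma posRoots_closure {i' : Fin S.l} {β : Module.Dual ℝ 𝔱}
    (hβp : β ∈ S.posRoots) (hne : β ≠ S.α i'.succ) :
    β - β (S.coroot (S.α i'.succ)) • S.α i'.succ ∈ S.posRoots := by
  have hβR : β ∈ S.R := by
    rw [posRoots, Finset.mem_filter] at hβp
    exact S.finR.mem_toFinset.mp hβp.1
  have hβcf := (S.mem_posRoots_iff hβR).mp hβp
  have hγR : β - β (S.coroot (S.α i'.succ)) • S.α i'.succ ∈ S.R :=
    S.reflect_mem (S.α i'.succ) (S.α_mem i'.succ) β hβR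
  set nn := β (S.coroot (S.α i'.succ)) with hnn
  have hγcf : S.cf (β - nn • S.α i'.succ)
      = fun k => S.cf β k - nn * (if k = i' then 1 else 0) := by
    apply S.cf_eq
    have e1 : ∑ k, (S.cf β k - nn * (if k = i' then 1 else 0)) • S.α k.succ
        = (∑ k, S.cf β k • S.α k.succ)
          - nn • ∑ k, (if k = i' then (1:ℝ) else 0) • S.α k.succ := by
      rw [Finset.smul_sum, ← Finset.sum_sub_distrib]
      exact Finset.sum_congr rfl fun k _ => by module
    rw [e1, ← S.cf_spec hβR, sum_ite_smul (fun k => S.α k.succ) i' (1:ℝ), one_smul]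
  have hexj : ∃ j, j ≠ i' ∧ 0 < S.cf β j := by
    by_contra h
    push_neg at h
    have hz : ∀ j, j ≠ i' → S.cf β j = 0 := fun j hj =>
      le_antisymm (h j hj) (hβcf j)
    have hb : β = S.cf β i' • S.α i'.succ := by
      conv_lhs => rw [S.cf_spec hβR]
      rw [Finset.sum_eq_single i']
      · intro b _ hb
        rw [hz b hb, zero_smul]
      · intro hb
        exact absurd (Finset.mem_univ i') hb
    have hmem2 : S.cf β i' • S.α i'.succ ∈ S.R := by rw [← hb]; exact hβR
    rcases S.reduced (S.α i'.succ) (S.α_mem i'.succ) _ hmem2 with h1 | h1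
    · exact hne (by rw [hb, h1, one_smul])
    · have := hβcf i'
      rw [h1] at this
      linarith
  rw [S.mem_posRoots_iff hγR]
  rcases S.cf_sign hγR with hpos | hneg
  · exact hpos
  · exfalso
    obtain ⟨j, hj, hjpos⟩ := hexj
    have h1 := hneg j
    rw [hγcf] at h1
    have h1' : S.cf β j - nn * (if j = i' then 1 else 0) ≤ 0 := h1
    rw [if_neg hj] at h1'
    have : S.cf β j ≤ 0 := by linarith [h1']
    linarith

lemma rho_pair (i' : Fin S.l) : S.rho (S.coroot (S.α i'.succ)) = 1 := by
  have hneg : -S.α i'.succ ∉ S.posRoots := by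
    intro hmem
    have h1 := (S.mem_posRoots_iff (S.neg_mem (S.α_mem i'.succ))).mp hmem i'
    rw [S.cf_neg (S.α_mem i'.succ)] at h1
    have h1' : 0 ≤ -S.cf (S.α i'.succ) i' := h1
    rw [S.cf_alpha_succ i'] at h1'
    have h1'' : 0 ≤ -(if i' = i' then (1:ℝ) else 0) := h1'
    rw [if_pos rfl] at h1''
    linarith
  have hsum := S.sum_pair_eq_two S.posRoots i'.succ (S.alpha_succ_posRoot i') hneg
    (fun β hβ hne => S.posRoots_closure hβ hne)
  rw [rho, LinearMap.smul_apply, LinearMap.sum_apply] at *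
  rw [hsum]
  norm_num

lemma rhoI_pair (hBinv : ∀ β ∈ S.R, ∀ x y : 𝔱,
      ⟪x - β x • S.coroot β, y - β y • S.coroot β⟫_ℝ = ⟪x, y⟫_ℝ)
    {I : Finset (Fin (S.l + 1))} (hI : I.Nonempty) {i : Fin (S.l + 1)}
    (hi : i ∉ I) : S.rhoI I (S.coroot (S.α i)) = 1 := by
  have hsum := S.sum_pair_eq_two (S.posRootsI I) i (S.alpha_mem_posRootsI hi)
    (S.neg_alpha_not_mem_posRootsI hI hi)
    (fun β hβ hne => S.closureI hBinv hI hi hβ hne)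
  rw [rhoI, LinearMap.smul_apply, LinearMap.sum_apply]
  rw [hsum]
  norm_num

lemma hv_def : S.hv = 1 + S.rho (S.coroot S.theta) := rfl

lemma hv_ge_two (hBinv : ∀ β ∈ S.R, ∀ x y : 𝔱,
      ⟪x - β x • S.coroot β, y - β y • S.coroot β⟫_ℝ = ⟪x, y⟫_ℝ) : 2 ≤ S.hv := by
  rw [hv_def]
  have h1 : ∀ β ∈ S.posRoots, 0 ≤ β (S.coroot S.theta) := fun β hβ =>
    S.pair_theta_nonneg hBinv hβ
  have h2 : S.theta (S.coroot S.theta) = 2 := S.pair_self _ S.theta_mem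
  have h3 := Finset.single_le_sum h1 S.theta_posRoot
  rw [h2] at h3
  rw [rho, LinearMap.smul_apply, LinearMap.sum_apply, smul_eq_mul]
  linarith

lemma rho_coroot_alpha0 (hBinv : ∀ β ∈ S.R, ∀ x y : 𝔱,
      ⟪x - β x • S.coroot β, y - β y • S.coroot β⟫_ℝ = ⟪x, y⟫_ℝ) :
    S.rho (S.coroot (S.α 0)) = 1 - S.hv := by
  have hcor : S.coroot (S.α 0) = -S.coroot S.theta := by
    rw [show S.α 0 = -S.theta from by rw [theta, neg_neg]]
    exact S.coroot_neg hBinv S.theta_mem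
  rw [hcor, map_neg, hv_def]
  ring

lemma rhoI_nonpos (hBinv : ∀ β ∈ S.R, ∀ x y : 𝔱,
      ⟪x - β x • S.coroot β, y - β y • S.coroot β⟫_ℝ = ⟪x, y⟫_ℝ)
    {I : Finset (Fin (S.l + 1))} {i : Fin (S.l + 1)} (hiI : i ∈ I) :
    S.rhoI I (S.coroot (S.α i)) ≤ 0 := by
  rw [rhoI, LinearMap.smul_apply, LinearMap.sum_apply, smul_eq_mul]
  have h : ∀ β ∈ S.posRootsI I, β (S.coroot (S.α i)) ≤ 0 := by
    intro β hβ
    obtain ⟨c, hcI, hcrep⟩ := S.mem_posRootsI_elim hβ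
    rw [hcrep, S.apply_sum (fun k => (c k : ℝ))]
    apply Finset.sum_nonpos
    intro k _
    rcases eq_or_ne (c k) 0 with h0 | h0
    · rw [h0]
      simp
    · have hkI : k ∉ I := fun hk => h0 (hcI k hk)
      have hki : k ≠ i := fun h => hkI (h ▸ hiI)
      have hob := S.obtuse hBinv hki
      have hc : (0:ℝ) ≤ (c k : ℝ) := by positivity
      exact mul_nonpos_of_nonneg_of_nonpos hc hob
  have hs := Finset.sum_nonpos h
  nlinarith

end SumLemmas

end Aux

end RSD

end CCQ

open CCQ Function

/-- for every nonempty `I ⊆ {0,…,l}`: `⟨ν_I,α_i^∨⟩ + δ_{i,0} = 0` for all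
`i ∉ I` and `⟨ν_I,α_i^∨⟩ + δ_{i,0} > 0` for all `i ∈ I`; equivalently, the point
`ν_I^♯ = B^♯(ν_I)` (the vector `ξ` with `⟪ξ,η⟫ = ν_I(η)` for all `η`) lies in the
relative interior of the face `{ξ ∈ Δ : ⟨α_i,ξ⟩ + δ_{i,0} = 0 for i ∉ I}` of the
fundamental alcove `Δ`.  Here the inner product is the basic inner product: it is
`W`-invariant (`hBinv`) and normalized by `B(θ^∨,θ^∨) = 2` (`hBnorm`). -/
theorem statement6 {𝔱 : Type} [NormedAddCommGroup 𝔱] [InnerProductSpace ℝ 𝔱]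
    [FiniteDimensional ℝ 𝔱] (S : RSD 𝔱)
    (hBinv : ∀ β ∈ S.R, ∀ x y : 𝔱,
      ⟪x - β x • S.coroot β, y - β y • S.coroot β⟫_ℝ = ⟪x, y⟫_ℝ)
    (hBnorm : ⟪S.coroot S.theta, S.coroot S.theta⟫_ℝ = 2)
    (I : Finset (Fin (S.l + 1))) (hI : I.Nonempty) :
    (∀ i ∉ I, S.nuI I (S.coroot (S.α i)) + S.kd i = 0) ∧
    (∀ i ∈ I, 0 < S.nuI I (S.coroot (S.α i)) + S.kd i) ∧
    (∀ ξ : 𝔱, (∀ η : 𝔱, ⟪ξ, η⟫_ℝ = S.nuI I η) →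
      (∀ i, 0 ≤ S.α i ξ + S.kd i) ∧ (∀ i ∉ I, S.α i ξ + S.kd i = 0) ∧
        (∀ i ∈ I, 0 < S.α i ξ + S.kd i)) := by
  have hv2 : 2 ≤ S.hv := S.hv_ge_two hBinv
  have hvpos : 0 < S.hv := by linarith
  have hvne : S.hv ≠ 0 := ne_of_gt hvpos
  have key : ∀ i : Fin (S.l + 1),
      S.nuI I (S.coroot (S.α i))
        = S.hv⁻¹ * (S.rho (S.coroot (S.α i)) - S.rhoI I (S.coroot (S.α i))) := by
    intro i
    rw [RSD.nuI, LinearMap.smul_apply, LinearMap.sub_apply, smul_eq_mul]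
  have key0 : ∀ i ∉ I, S.nuI I (S.coroot (S.α i)) + S.kd i = 0 := by
    intro i hi
    have hρI := S.rhoI_pair hBinv hI hi
    rw [key i, hρI]
    rcases Fin.eq_zero_or_eq_succ i with rfl | ⟨i', rfl⟩
    · rw [S.rho_coroot_alpha0 hBinv]
      simp only [RSD.kd, eq_self_iff_true, if_true]
      field_simp
      ring
    · rw [S.rho_pair i']
      simp [RSD.kd, Fin.succ_ne_zero]
  have key1 : ∀ i ∈ I, 0 < S.nuI I (S.coroot (S.α i)) + S.kd i := by
    intro i hi
    have hρI := S.rhoI_nonpos hBinv hi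
    rw [key i]
    have hinv : 0 < S.hv⁻¹ := inv_pos.mpr hvpos
    rcases Fin.eq_zero_or_eq_succ i with rfl | ⟨i', rfl⟩
    · rw [S.rho_coroot_alpha0 hBinv]
      simp only [RSD.kd, eq_self_iff_true, if_true]
      have heq : S.hv⁻¹ * ((1 - S.hv) - S.rhoI I (S.coroot (S.α 0))) + 1
          = S.hv⁻¹ * (1 - S.rhoI I (S.coroot (S.α 0))) := by
        field_simp
        ring
      rw [heq]
      have h1 : 0 < 1 - S.rhoI I (S.coroot (S.α 0)) := by linarith
      exact mul_pos hinv h1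
    · rw [S.rho_pair i']
      have hkd : S.kd i'.succ = 0 := by simp [RSD.kd, Fin.succ_ne_zero]
      rw [hkd, add_zero]
      have h1 : 0 < 1 - S.rhoI I (S.coroot (S.α i'.succ)) := by linarith
      exact mul_pos hinv h1
  refine ⟨key0, key1, ?_⟩
  intro ξ hξ
  have hform : ∀ i : Fin (S.l + 1),
      S.α i ξ * ⟪S.coroot (S.α i), S.coroot (S.α i)⟫_ℝ
        = 2 * S.nuI I (S.coroot (S.α i)) := by
    intro i
    rw [S.Bform hBinv (S.α_mem i) ξ, hξ]
  have hscale : ∀ i : Fin (S.l + 1), ∃ t : ℝ, 0 < t ∧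
      S.α i ξ + S.kd i = t * (S.nuI I (S.coroot (S.α i)) + S.kd i) := by
    intro i
    rcases Fin.eq_zero_or_eq_succ i with rfl | ⟨i', rfl⟩
    · refine ⟨1, one_pos, ?_⟩
      have hcor : S.coroot (S.α 0) = -S.coroot S.theta := by
        rw [show S.α 0 = -S.theta from by rw [RSD.theta, neg_neg]]
        exact S.coroot_neg hBinv S.theta_mem
      have hnorm0 : ⟪S.coroot (S.α 0), S.coroot (S.α 0)⟫_ℝ = 2 := by
        rw [hcor, inner_neg_neg, hBnorm]
      have h1 := hform 0
      rw [hnorm0] at h1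
      have h2 : S.α 0 ξ = S.nuI I (S.coroot (S.α 0)) := by linarith
      rw [h2, one_mul]
    · have ht := S.coroot_norm_pos (S.α_mem i'.succ)
      refine ⟨2 / ⟪S.coroot (S.α i'.succ), S.coroot (S.α i'.succ)⟫_ℝ, by positivity, ?_⟩
      have h1 := hform i'.succ
      have hkd : S.kd i'.succ = 0 := by simp [RSD.kd, Fin.succ_ne_zero]
      rw [hkd, add_zero, add_zero, div_mul_eq_mul_div, eq_div_iff (ne_of_gt ht)]
      linarith [h1]
  have part2 : ∀ i ∉ I, S.α i ξ + S.kd i = 0 := by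
    intro i hi
    obtain ⟨t, _, hteq⟩ := hscale i
    rw [hteq, key0 i hi, mul_zero]
  have part3 : ∀ i ∈ I, 0 < S.α i ξ + S.kd i := by
    intro i hi
    obtain ⟨t, ht, hteq⟩ := hscale i
    rw [hteq]
    exact mul_pos ht (key1 i hi)
  refine ⟨?_, part2, part3⟩
  intro i
  by_cases hi : i ∈ I
  · exact le_of_lt (part3 i hi)
  · exact le_of_eq (part2 i hi).symm
end
end

section
/- In C_0(J) = ⊕_{i=0}^{l} ℤ[V]^{W_{{i}}-as}, write φ ∼ φ′ if φ − φ′ ∈ ∂(C_1(J)). Then for all i, j ∈ {0,…,l} and all x ∈ V: the element Sk^{{i}}(x), viewed in the i-th summand, satisfies Sk^{{i}}(x) ∼ Sk^{{j}}(x) (viewed in the j-th summand), and Sk^{{i}}(x) ∼ det(w)·Sk^{{i}}(w·x) for every w ∈ W_aff. -/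
/- Common setup: an irreducible reduced crystallographic root system `R ⊂ 𝔱*` spanning `𝔱*`,
with simple roots `α 1,…,α l`, `α 0 = -θ` (θ the highest root), coroots, weight lattice,
(level `m`) affine Weyl groups acting on `𝔱*` and `𝔱`, anti-invariants, skew-symmetrization
maps and the associated chain complexes, following Meinrenken,
"On the quantization of conjugacy classes", Section 5. -/

noncomputable section
open scoped BigOperators InnerProductSpace Classical
open Function

namespace CCQ

section GenericLemmas

variable {M : Type*} [AddCommGroup M] [Module ℝ M]

lemma aref_apply {f : Module.Dual ℝ M} {v : M} (h : f v = 2) (c : ℝ) (x : M) :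
    aref h c x = x - f x • v - c • v := by
  show -(c • v) +ᵥ (Module.reflection h x) = _
  rw [Module.reflection_apply]
  show -(c • v) + (x - f x • v) = _
  abel

lemma aref_mul_self {f : Module.Dual ℝ M} {v : M} (h : f v = 2) (c : ℝ) :
    aref h c * aref h c = 1 := by
  ext x
  show aref h c (aref h c x) = x
  rw [aref_apply, aref_apply, map_sub, map_sub, map_smul, map_smul, h]
  simp only [smul_eq_mul, sub_smul, mul_smul]
  module

lemma aref_linear_apply {f : Module.Dual ℝ M} {v : M} (h : f v = 2) (c : ℝ) (x : M) :
    (aref h c).linear x = x - f x • v := by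
  have e0 : (aref h c).linear x = Module.reflection h x := rfl
  rw [e0, Module.reflection_apply]

lemma asign_sq (w : M ≃ᵃ[ℝ] M) : asign w * asign w = 1 := by
  unfold asign; split_ifs <;> norm_num

/-- det of the linear part is `±1`. -/
def DetPM (w : M ≃ᵃ[ℝ] M) : Prop :=
  LinearMap.det w.linear.toLinearMap = 1 ∨ LinearMap.det w.linear.toLinearMap = -1

lemma det_linear_mul (w u : M ≃ᵃ[ℝ] M) :
    LinearMap.det (w * u).linear.toLinearMap =
      LinearMap.det w.linear.toLinearMap * LinearMap.det u.linear.toLinearMap := by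
  have e0 : (w * u).linear.toLinearMap = w.linear.toLinearMap ∘ₗ u.linear.toLinearMap := rfl
  rw [e0, LinearMap.det_comp]

lemma DetPM.one : DetPM (1 : M ≃ᵃ[ℝ] M) := by
  left
  have e0 : (1 : M ≃ᵃ[ℝ] M).linear.toLinearMap = LinearMap.id := rfl
  rw [e0, LinearMap.det_id]

lemma DetPM.mul {w u : M ≃ᵃ[ℝ] M} (hw : DetPM w) (hu : DetPM u) : DetPM (w * u) := by
  rcases hw with h1 | h1 <;> rcases hu with h2 | h2 <;>
    [left; right; right; left] <;> rw [det_linear_mul, h1, h2] <;> norm_num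

lemma det_linear_inv (w : M ≃ᵃ[ℝ] M) (hw : DetPM w) :
    LinearMap.det w⁻¹.linear.toLinearMap = LinearMap.det w.linear.toLinearMap := by
  have h : LinearMap.det (w * w⁻¹).linear.toLinearMap = 1 := by
    rw [mul_inv_cancel]
    have e0 : (1 : M ≃ᵃ[ℝ] M).linear.toLinearMap = LinearMap.id := rfl
    rw [e0, LinearMap.det_id]
  rw [det_linear_mul] at h
  rcases hw with h1 | h1 <;> rw [h1] at h ⊢ <;> linarith

lemma DetPM.inv {w : M ≃ᵃ[ℝ] M} (hw : DetPM w) : DetPM w⁻¹ := by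
  rw [DetPM, det_linear_inv w hw]; exact hw

lemma DetPM.of_sq {w : M ≃ᵃ[ℝ] M} (h : w * w = 1) : DetPM w := by
  have h2 := det_linear_mul w w
  rw [h] at h2
  have h1 : (1 : M ≃ᵃ[ℝ] M).linear.toLinearMap = LinearMap.id := rfl
  rw [h1, LinearMap.det_id] at h2
  exact (mul_self_eq_one_iff.mp h2.symm)

lemma asign_mul {w u : M ≃ᵃ[ℝ] M} (hw : DetPM w) (hu : DetPM u) :
    asign (w * u) = asign w * asign u := by
  unfold asign
  rw [det_linear_mul]
  rcases hw with h1 | h1 <;> rcases hu with h2 | h2 <;> rw [h1, h2] <;> norm_num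

lemma asign_inv {w : M ≃ᵃ[ℝ] M} (hw : DetPM w) : asign w⁻¹ = asign w := by
  unfold asign
  rw [det_linear_inv w hw]

lemma asign_one : asign (1 : M ≃ᵃ[ℝ] M) = 1 := by
  unfold asign
  have e0 : (1 : M ≃ᵃ[ℝ] M).linear.toLinearMap = LinearMap.id := rfl
  rw [e0, LinearMap.det_id, if_pos rfl]

lemma inv_apply_eq_iff (w : M ≃ᵃ[ℝ] M) (y z : M) : w⁻¹ y = z ↔ y = w z := by
  constructor
  · rintro rfl
    exact (w.apply_symm_apply y).symm
  · rintro rfl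
    exact w.symm_apply_apply z

lemma affine_ext {w w' : M ≃ᵃ[ℝ] M} {p : M} (hlin : w.linear = w'.linear)
    (hw : w p = p) (hw' : w' p = p) : w = w' := by
  ext x
  have hx : x = (x - p) +ᵥ p := by
    show x = (x - p) + p
    abel
  calc w x = w ((x - p) +ᵥ p) := by rw [← hx]
    _ = w.linear (x - p) +ᵥ w p := w.toAffineMap.map_vadd p (x - p)
    _ = w'.linear (x - p) +ᵥ w' p := by rw [hlin, hw, hw']
    _ = w' ((x - p) +ᵥ p) := (w'.toAffineMap.map_vadd p (x - p)).symm
    _ = w' x := by rw [← hx]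

variable {H K : Subgroup (M ≃ᵃ[ℝ] M)}

lemma SkOrb_eq_finset_sum (hH : (H : Set (M ≃ᵃ[ℝ] M)).Finite) (x y : M) :
    SkOrb H x y = ∑ w ∈ hH.toFinset, if y = w x then asign w else 0 := by
  haveI : Fintype H := @Fintype.ofFinite _ hH.to_subtype
  simp only [SkOrb]
  refine (finsum_eq_sum_of_fintype _).trans ?_
  exact (Finset.sum_subtype hH.toFinset (fun w => hH.mem_toFinset)
    (fun w => if y = w x then asign w else 0)).symm

lemma SkOrb_support (hH : (H : Set (M ≃ᵃ[ℝ] M)).Finite) (x : M) :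
    support (SkOrb H x) ⊆ (fun w : M ≃ᵃ[ℝ] M => w x) '' (H : Set (M ≃ᵃ[ℝ] M)) := by
  intro y hy
  rw [mem_support, SkOrb_eq_finset_sum hH] at hy
  obtain ⟨w, hw, hne⟩ := Finset.exists_ne_zero_of_sum_ne_zero hy
  refine ⟨w, hH.mem_toFinset.mp hw, ?_⟩
  by_contra hc
  rw [if_neg (fun h => hc h.symm)] at hne
  exact hne rfl

lemma SkOrb_apply_smul (hH : (H : Set (M ≃ᵃ[ℝ] M)).Finite)
    (hdet : ∀ w ∈ H, DetPM w) {v : M ≃ᵃ[ℝ] M} (hv : v ∈ H) (x : M) :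
    SkOrb H (v x) = asign v • SkOrb H x := by
  funext y
  rw [Pi.smul_apply, SkOrb_eq_finset_sum hH, SkOrb_eq_finset_sum hH, smul_eq_mul,
    Finset.mul_sum]
  refine Finset.sum_nbij' (fun w => w * v) (fun w => w * v⁻¹) ?_ ?_ ?_ ?_ ?_
  · intro w hw
    rw [Set.Finite.mem_toFinset] at hw ⊢
    exact mul_mem hw hv
  · intro w hw
    rw [Set.Finite.mem_toFinset] at hw ⊢
    exact mul_mem hw (inv_mem hv)
  · intro w _; group
  · intro w _; group
  · intro w hw
    rw [Set.Finite.mem_toFinset] at hw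
    have harg : (w * v) x = w (v x) := rfl
    rw [harg]
    by_cases h : y = w (v x)
    · rw [if_pos h, if_pos h, asign_mul (hdet w hw) (hdet v hv),
        show asign v * (asign w * asign v) = asign w * (asign v * asign v) by ring,
        asign_sq, mul_one]
    · rw [if_neg h, if_neg h, mul_zero]

lemma AntiInv_SkOrb (hH : (H : Set (M ≃ᵃ[ℝ] M)).Finite)
    (hdet : ∀ w ∈ H, DetPM w) (x : M) : AntiInv H (SkOrb H x) := by
  intro w hw y
  rw [SkOrb_eq_finset_sum hH, SkOrb_eq_finset_sum hH, Finset.mul_sum]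
  refine Finset.sum_nbij' (fun u => w * u) (fun u => w⁻¹ * u) ?_ ?_ ?_ ?_ ?_
  · intro u hu
    rw [Set.Finite.mem_toFinset] at hu ⊢
    exact mul_mem hw hu
  · intro u hu
    rw [Set.Finite.mem_toFinset] at hu ⊢
    exact mul_mem (inv_mem hw) hu
  · intro u _; group
  · intro u _; group
  · intro u hu
    rw [Set.Finite.mem_toFinset] at hu
    have hcond : (w⁻¹ y = u x) ↔ (y = (w * u) x) := inv_apply_eq_iff w y (u x)
    by_cases h : w⁻¹ y = u x
    · rw [if_pos h, if_pos (hcond.mp h), asign_mul (hdet w hw) (hdet u hu),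
        show asign w * (asign w * asign u) = (asign w * asign w) * asign u by ring,
        asign_sq, one_mul]
    · rw [if_neg h, if_neg (fun hc => h (hcond.mpr hc)), mul_zero]

lemma SkRep_SkOrb {T : Finset (M ≃ᵃ[ℝ] M)}
    (hT : IsRepFinset H K T) (hHK : H ≤ K) (hK : (K : Set (M ≃ᵃ[ℝ] M)).Finite)
    (hdet : ∀ w ∈ K, DetPM w) (x : M) :
    SkRep T (SkOrb H x) = SkOrb K x := by
  have hH : (H : Set (M ≃ᵃ[ℝ] M)).Finite := hK.subset hHK
  funext y
  rw [SkRep, SkOrb_eq_finset_sum hK]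
  have step1 : ∀ u ∈ T, asign u * SkOrb H x (u⁻¹ y) =
      ∑ w ∈ hH.toFinset, if y = (u * w) x then asign (u * w) else 0 := by
    intro u hu
    have huK : u ∈ K := hT.1 hu
    rw [SkOrb_eq_finset_sum hH, Finset.mul_sum]
    refine Finset.sum_congr rfl fun w hw => ?_
    rw [Set.Finite.mem_toFinset] at hw
    have hcond : (u⁻¹ y = w x) ↔ (y = (u * w) x) := inv_apply_eq_iff u y (w x)
    by_cases h : u⁻¹ y = w x
    · rw [if_pos h, if_pos (hcond.mp h), asign_mul (hdet u huK) (hdet w (hHK hw))]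
    · rw [if_neg h, if_neg (fun hc => h (hcond.mpr hc)), mul_zero]
  rw [Finset.sum_congr rfl step1]
  have hKdec : hK.toFinset = T.biUnion (fun u => hH.toFinset.image (fun w => u * w)) := by
    ext v
    simp only [Set.Finite.mem_toFinset, Finset.mem_biUnion, Finset.mem_image]
    constructor
    · intro hv
      obtain ⟨u, ⟨huT, huH⟩, -⟩ := hT.2 v hv
      exact ⟨u, huT, u⁻¹ * v, by simpa using huH, by group⟩
    · rintro ⟨u, huT, w, hw, rfl⟩
      exact mul_mem (hT.1 huT) (hHK (by simpa using hw))
  have hdisj : Set.PairwiseDisjoint (↑T : Set (M ≃ᵃ[ℝ] M))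
      (fun u => hH.toFinset.image (fun w => u * w)) := by
    intro u hu u' hu' hne
    simp only [Function.onFun]
    rw [Finset.disjoint_left]
    intro z hz1 hz2
    rw [Finset.mem_image] at hz1 hz2
    obtain ⟨w, hw, rfl⟩ := hz1
    obtain ⟨w', hw', hzz⟩ := hz2
    rw [Set.Finite.mem_toFinset] at hw hw'
    have hzK : u * w ∈ K := mul_mem (hT.1 hu) (hHK hw)
    obtain ⟨v0, -, huniq⟩ := hT.2 (u * w) hzK
    have e1 := huniq u ⟨hu, by rw [inv_mul_cancel_left]; exact hw⟩
    have e2 := huniq u' ⟨hu', by rw [← hzz, inv_mul_cancel_left]; exact hw'⟩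
    exact hne (e1.trans e2.symm)
  rw [hKdec, Finset.sum_biUnion hdisj]
  refine Finset.sum_congr rfl fun u hu => ?_
  rw [Finset.sum_image (fun w _ w' _ h => mul_left_cancel h)]

lemma SkRep_zero (T : Finset (M ≃ᵃ[ℝ] M)) : SkRep T (0 : M → ℤ) = 0 := by
  funext x; simp [SkRep]

lemma SkRep_add (T : Finset (M ≃ᵃ[ℝ] M)) (φ ψ : M → ℤ) :
    SkRep T (φ + ψ) = SkRep T φ + SkRep T ψ := by
  funext x
  simp only [SkRep, Pi.add_apply, mul_add]
  rw [Finset.sum_add_distrib]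

lemma SkRep_zsmul (T : Finset (M ≃ᵃ[ℝ] M)) (z : ℤ) (φ : M → ℤ) :
    SkRep T (z • φ) = z • SkRep T φ := by
  funext x
  simp only [SkRep, Pi.smul_apply, smul_eq_mul, Finset.mul_sum]
  exact Finset.sum_congr rfl fun u _ => by ring

lemma bdGen_add {n : ℕ} (Srep : Finset (Fin n) → Finset (Fin n) → Finset (M ≃ᵃ[ℝ] M))
    (c c' : Finset (Fin n) → M → ℤ) :
    bdGen Srep (c + c') = bdGen Srep c + bdGen Srep c' := by
  funext K x
  simp only [bdGen, Pi.add_apply]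
  rw [← Finset.sum_add_distrib]
  refine Finset.sum_congr rfl fun i _ => ?_
  rw [SkRep_add]
  simp only [Pi.add_apply]
  ring

lemma bdGen_zsmul {n : ℕ} (Srep : Finset (Fin n) → Finset (Fin n) → Finset (M ≃ᵃ[ℝ] M))
    (z : ℤ) (c : Finset (Fin n) → M → ℤ) :
    bdGen Srep (z • c) = z • bdGen Srep c := by
  funext K x
  simp only [bdGen, Pi.smul_apply, smul_eq_mul, Finset.mul_sum]
  refine Finset.sum_congr rfl fun i _ => ?_
  rw [SkRep_zsmul]
  simp only [Pi.smul_apply, smul_eq_mul]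
  ring

lemma bdGen_zero {n : ℕ} (Srep : Finset (Fin n) → Finset (Fin n) → Finset (M ≃ᵃ[ℝ] M)) :
    bdGen Srep (0 : Finset (Fin n) → M → ℤ) = 0 := by
  funext K x
  simp [bdGen, SkRep_zero]

lemma bdGen_neg {n : ℕ} (Srep : Finset (Fin n) → Finset (Fin n) → Finset (M ≃ᵃ[ℝ] M))
    (c : Finset (Fin n) → M → ℤ) :
    bdGen Srep (-c) = -bdGen Srep c := by
  have h := bdGen_zsmul Srep (-1) c
  rw [neg_one_smul] at h
  rw [h, neg_one_smul]

lemma bdGen_sub {n : ℕ} (Srep : Finset (Fin n) → Finset (Fin n) → Finset (M ≃ᵃ[ℝ] M))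
    (c c' : Finset (Fin n) → M → ℤ) :
    bdGen Srep (c - c') = bdGen Srep c - bdGen Srep c' := by
  rw [sub_eq_add_neg, bdGen_add, bdGen_neg, ← sub_eq_add_neg]

lemma single_self {n : ℕ} (I : Finset (Fin n)) (φ : M → ℤ) : single I φ I = φ :=
  if_pos rfl

lemma single_ne {n : ℕ} {I K : Finset (Fin n)} (h : K ≠ I) (φ : M → ℤ) :
    single I φ K = 0 := if_neg h

lemma zsmul_single {n : ℕ} (z : ℤ) (I : Finset (Fin n)) (φ : M → ℤ) :
    z • single I φ = single I (z • φ) := by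
  funext K
  by_cases h : K = I <;> simp [single, h]

lemma insert_eq_pair {n : ℕ} {i j : Fin n} (hij : i ≠ j) {K : Finset (Fin n)} {k : Fin n}
    (hk : k ∉ K) (h : insert k K = {i, j}) : (k = i ∧ K = {j}) ∨ (k = j ∧ K = {i}) := by
  have hkmem : k ∈ ({i, j} : Finset (Fin n)) := h ▸ Finset.mem_insert_self k K
  rw [Finset.mem_insert, Finset.mem_singleton] at hkmem
  have hK : K = ({i, j} : Finset (Fin n)).erase k := by
    rw [← h, Finset.erase_insert hk]
  rcases hkmem with rfl | rfl
  · refine Or.inl ⟨rfl, ?_⟩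
    rw [hK]
    exact Finset.erase_insert (by simp [hij])
  · refine Or.inr ⟨rfl, ?_⟩
    rw [hK, Finset.pair_comm]
    exact Finset.erase_insert (by simp [Ne.symm hij])

end GenericLemmas

namespace RSD

section MoreLemmas

variable {𝔱 : Type*} [AddCommGroup 𝔱] [Module ℝ 𝔱] (S : RSD 𝔱)

lemma rrefl_apply (k : Fin (S.l + 1)) (ξ : 𝔱) :
    S.rrefl k ξ = ξ - (S.α k ξ) • S.coroot (S.α k) - (S.kd k) • S.coroot (S.α k) :=
  aref_apply _ _ _

lemma rrefl_fixed {k : Fin (S.l + 1)} {p : 𝔱} (h : S.α k p + S.kd k = 0) :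
    S.rrefl k p = p := by
  rw [rrefl_apply, sub_sub, ← add_smul, h, zero_smul, sub_zero]

lemma rrefl_mul_self (k : Fin (S.l + 1)) : S.rrefl k * S.rrefl k = 1 :=
  aref_mul_self _ _

lemma rrefl_inv (k : Fin (S.l + 1)) : (S.rrefl k)⁻¹ = S.rrefl k :=
  inv_eq_of_mul_eq_one_right (S.rrefl_mul_self k)

lemma rrefl_detpm (k : Fin (S.l + 1)) : DetPM (S.rrefl k) :=
  DetPM.of_sq (S.rrefl_mul_self k)

lemma comp_rrefl_linear (k : Fin (S.l + 1)) (γ : Module.Dual ℝ 𝔱) :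
    γ ∘ₗ (S.rrefl k).linear.toLinearMap = γ - (γ (S.coroot (S.α k))) • S.α k := by
  ext x
  have e0 : (S.rrefl k).linear x = x - (S.α k x) • S.coroot (S.α k) :=
    aref_linear_apply _ _ _
  simp only [LinearMap.comp_apply, LinearEquiv.coe_coe, LinearMap.sub_apply,
    LinearMap.smul_apply, smul_eq_mul]
  rw [e0, map_sub, map_smul]
  simp only [smul_eq_mul]
  ring

lemma reflect_root (k : Fin (S.l + 1)) {γ : Module.Dual ℝ 𝔱} (hγ : γ ∈ S.R) :
    γ ∘ₗ (S.rrefl k).linear.toLinearMap ∈ S.R := by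
  rw [S.comp_rrefl_linear k γ]
  exact S.reflect_mem (S.α k) (S.α_mem k) γ hγ

lemma detpm_WaffB : ∀ w ∈ S.WaffB, DetPM w := by
  intro w hw
  refine Subgroup.closure_induction ?_ ?_ ?_ ?_ hw
  · rintro r ⟨k, rfl⟩
    exact S.rrefl_detpm k
  · exact DetPM.one
  · exact fun x y _ _ hx hy => hx.mul hy
  · exact fun x _ hx => hx.inv

lemma WIB_le_WaffB (I : Finset (Fin (S.l + 1))) : S.WIB I ≤ S.WaffB :=
  Subgroup.closure_mono (by rintro w ⟨i, -, rfl⟩; exact ⟨i, rfl⟩)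

lemma WIB_mono {I I' : Finset (Fin (S.l + 1))} (h : I ⊆ I') : S.WIB I' ≤ S.WIB I :=
  Subgroup.closure_mono (by rintro w ⟨i, hi, rfl⟩; exact ⟨i, fun hm => hi (h hm), rfl⟩)

lemma detpm_WIB {I : Finset (Fin (S.l + 1))} : ∀ w ∈ S.WIB I, DetPM w :=
  fun w hw => S.detpm_WaffB w (S.WIB_le_WaffB I hw)

lemma indep_del {i₀ : Fin (S.l + 1)} (h0 : i₀ ≠ 0) (b : Fin (S.l + 1) → ℝ)
    (hb0 : b i₀ = 0) (hb : ∑ k, b k • S.α k = 0) : ∀ k, b k = 0 := by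
  obtain ⟨j₀, hj₀⟩ := Fin.exists_succ_eq.mpr h0
  obtain ⟨c, hc⟩ := S.highest (S.α i₀) (S.α_mem i₀)
  have hα0 : S.α 0 = -S.α i₀ - ∑ i, (c i : ℝ) • S.α i.succ := by
    rw [← hc]; abel
  have hsplit : b 0 • S.α 0 + ∑ i : Fin S.l, b i.succ • S.α i.succ = 0 := by
    rw [← hb, Fin.sum_univ_succ]
  set g : Fin S.l → ℝ :=
    fun i => b i.succ - b 0 * (c i : ℝ) - (if i = j₀ then b 0 else 0) with hgdef
  have hg : ∑ i, g i • S.α i.succ = 0 := by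
    have term : ∀ i : Fin S.l, g i • S.α i.succ
        = b i.succ • S.α i.succ - b 0 • ((c i : ℝ) • S.α i.succ)
          - (if i = j₀ then b 0 • S.α i.succ else 0) := by
      intro i
      simp only [hgdef]
      by_cases h : i = j₀
      · rw [if_pos h, if_pos h]
        module
      · rw [if_neg h, if_neg h, sub_zero, sub_zero]
        module
    have expand : ∑ i, g i • S.α i.succ
        = ∑ i : Fin S.l, b i.succ • S.α i.succ
            - b 0 • (∑ i : Fin S.l, (c i : ℝ) • S.α i.succ)
            - b 0 • S.α i₀ := by
      rw [Finset.sum_congr rfl (fun i _ => term i), Finset.sum_sub_distrib,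
        Finset.sum_sub_distrib, Finset.sum_ite_eq' Finset.univ j₀,
        if_pos (Finset.mem_univ j₀), ← Finset.smul_sum, hj₀]
    rw [expand, eq_neg_of_add_eq_zero_right hsplit, hα0, smul_sub, smul_neg]
    abel
  have hg0 := Fintype.linearIndependent_iff.mp S.indep g hg
  have hb00 : b 0 = 0 := by
    have hj := hg0 j₀
    simp only [hgdef, eq_self_iff_true, if_true] at hj
    rw [hj₀, hb0] at hj
    have hc0 : (0 : ℝ) ≤ (c j₀ : ℝ) := Nat.cast_nonneg _
    have hfac : b 0 * ((c j₀ : ℝ) + 1) = 0 := by linarith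
    rcases mul_eq_zero.mp hfac with h | h
    · exact h
    · linarith
  intro k
  refine Fin.cases ?_ ?_ k
  · exact hb00
  · intro i
    have hi := hg0 i
    simp only [hgdef, hb00, zero_mul, sub_zero] at hi
    rcases eq_or_ne i j₀ with h | h
    · rw [if_pos h] at hi
      simpa using hi
    · rw [if_neg h] at hi
      simpa using hi

lemma exists_vertex [FiniteDimensional ℝ 𝔱] {I : Finset (Fin (S.l + 1))}
    (hI : I.Nonempty) : ∃ p : 𝔱, ∀ k ∉ I, S.α k p + S.kd k = 0 := by
  by_cases h0 : (0 : Fin (S.l + 1)) ∈ I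
  · refine ⟨0, fun k hk => ?_⟩
    have hne : k ≠ 0 := fun h => hk (h ▸ h0)
    simp [kd, hne]
  · obtain ⟨i₀, hi₀⟩ := hI
    have h00 : i₀ ≠ 0 := fun h => h0 (h ▸ hi₀)
    have hli : LinearIndependent ℝ
        (fun k : {k : Fin (S.l + 1) // k ≠ i₀} => S.α (k : Fin (S.l + 1))) := by
      rw [Fintype.linearIndependent_iff]
      intro g hg k
      set b : Fin (S.l + 1) → ℝ := fun k => if h : k = i₀ then 0 else g ⟨k, h⟩ with hbdef
      have hb : ∑ k, b k • S.α k = 0 := by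
        have e1 : ∑ k, b k • S.α k
            = ∑ k : {k : Fin (S.l + 1) // k ≠ i₀},
                b (k : Fin (S.l + 1)) • S.α (k : Fin (S.l + 1)) := by
          rw [← Finset.sum_erase_add Finset.univ _ (Finset.mem_univ i₀),
            show b i₀ • S.α i₀ = 0 by simp [hbdef], add_zero]
          exact Finset.sum_subtype _ (fun k => by simp) _
        rw [e1, ← hg]
        refine Finset.sum_congr rfl fun k _ => ?_
        rw [show b (k : Fin (S.l + 1)) = g k by rw [hbdef]; exact dif_neg k.2]
      have hall := S.indep_del h00 b (by simp [hbdef]) hb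
      have hk := hall (k : Fin (S.l + 1))
      rwa [show b (k : Fin (S.l + 1)) = g k by rw [hbdef]; exact dif_neg k.2] at hk
    have hinj : Function.Injective
        (fun k : {k : Fin (S.l + 1) // k ≠ i₀} => S.α (k : Fin (S.l + 1))) := hli.injective
    have hset := (linearIndepOn_id_range_iff hinj).mpr hli
    set B := Module.Basis.extend hset with hB
    set v : (hset.extend (Set.subset_univ _)) → ℝ :=
      fun γ => if (γ : Module.Dual ℝ 𝔱) = S.α 0 then -1 else 0 with hv
    set Φ : Module.Dual ℝ (Module.Dual ℝ 𝔱) := B.constr ℝ v with hΦ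
    refine ⟨(Module.evalEquiv ℝ 𝔱).symm Φ, fun k hk => ?_⟩
    have hk0 : k ≠ i₀ := fun h => hk (h ▸ hi₀)
    have hmem : S.α k ∈ hset.extend (Set.subset_univ _) :=
      hset.subset_extend _ ⟨⟨k, hk0⟩, rfl⟩
    have hval : S.α k ((Module.evalEquiv ℝ 𝔱).symm Φ) = Φ (S.α k) :=
      Module.apply_evalEquiv_symm_apply ℝ 𝔱 _ _
    have hBk : B ⟨S.α k, hmem⟩ = S.α k := Module.Basis.extend_apply_self hset ⟨S.α k, hmem⟩
    have hΦk : Φ (S.α k) = v ⟨S.α k, hmem⟩ := by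
      have h1 : Φ (B ⟨S.α k, hmem⟩) = v ⟨S.α k, hmem⟩ := B.constr_basis ℝ v _
      rwa [hBk] at h1
    rw [hval, hΦk]
    by_cases hk00 : k = 0
    · subst hk00
      simp [hv, kd]
    · have hne : S.α k ≠ S.α 0 := by
        intro he
        have h0i : (0 : Fin (S.l + 1)) ≠ i₀ := Ne.symm h00
        have := hinj (a₁ := ⟨k, hk0⟩) (a₂ := ⟨0, h0i⟩) he
        exact hk00 (congrArg Subtype.val this)
      simp [hv, hne, kd, hk00]

lemma fixed_WIB [FiniteDimensional ℝ 𝔱] {I : Finset (Fin (S.l + 1))} (hI : I.Nonempty) :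
    ∃ p : 𝔱, ∀ w ∈ S.WIB I, w p = p := by
  obtain ⟨p, hp⟩ := S.exists_vertex hI
  refine ⟨p, fun w hw => ?_⟩
  refine Subgroup.closure_induction ?_ ?_ ?_ ?_ hw
  · rintro r ⟨k, hk, rfl⟩
    exact S.rrefl_fixed (hp k hk)
  · rfl
  · intro x y _ _ hx hy
    show x (y p) = p
    rw [hy, hx]
  · intro x _ hx
    exact (inv_apply_eq_iff x p p).mpr hx.symm

lemma dual_mem : ∀ w ∈ S.WaffB, ∀ γ ∈ S.R, γ ∘ₗ w.linear.toLinearMap ∈ S.R := by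
  intro w hw
  have key : (∀ γ ∈ S.R, γ ∘ₗ w.linear.toLinearMap ∈ S.R) ∧
      (∀ γ ∈ S.R, γ ∘ₗ (w⁻¹).linear.toLinearMap ∈ S.R) := by
    refine Subgroup.closure_induction ?_ ?_ ?_ ?_ hw
    · rintro r ⟨k, rfl⟩
      refine ⟨fun γ hγ => S.reflect_root k hγ, ?_⟩
      rw [S.rrefl_inv k]
      exact fun γ hγ => S.reflect_root k hγ
    · constructor <;> intro γ hγ <;> exact hγ
    · intro x y _ _ hx hy
      constructor
      · intro γ hγ
        have e0 : γ ∘ₗ (x * y).linear.toLinearMap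
            = (γ ∘ₗ x.linear.toLinearMap) ∘ₗ y.linear.toLinearMap := rfl
        rw [e0]
        exact hy.1 _ (hx.1 γ hγ)
      · intro γ hγ
        have e0 : γ ∘ₗ ((x * y)⁻¹).linear.toLinearMap
            = (γ ∘ₗ (y⁻¹).linear.toLinearMap) ∘ₗ (x⁻¹).linear.toLinearMap := by
          rw [mul_inv_rev]
          rfl
        rw [e0]
        exact hx.2 _ (hy.2 γ hγ)
    · intro x _ hx
      refine ⟨hx.2, ?_⟩
      rw [inv_inv]
      exact hx.1
  exact key.1

lemma WIB_finite [FiniteDimensional ℝ 𝔱] {I : Finset (Fin (S.l + 1))} (hI : I.Nonempty) :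
    (S.WIB I : Set (𝔱 ≃ᵃ[ℝ] 𝔱)).Finite := by
  obtain ⟨p, hp⟩ := S.fixed_WIB hI
  haveI : Finite S.R := S.finR.to_subtype
  set F : S.WIB I → (S.R → S.R) := fun w γ =>
    ⟨(γ : Module.Dual ℝ 𝔱) ∘ₗ (w : 𝔱 ≃ᵃ[ℝ] 𝔱).linear.toLinearMap,
      S.dual_mem _ (S.WIB_le_WaffB I w.2) _ γ.2⟩ with hF
  have hinj : Function.Injective F := by
    intro w w' h
    have hcomp : ∀ γ : Module.Dual ℝ 𝔱,
        γ ∘ₗ (w : 𝔱 ≃ᵃ[ℝ] 𝔱).linear.toLinearMap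
          = γ ∘ₗ (w' : 𝔱 ≃ᵃ[ℝ] 𝔱).linear.toLinearMap := by
      intro γ
      have hγ : γ ∈ Submodule.span ℝ S.R := by rw [S.spanR]; trivial
      induction hγ using Submodule.span_induction with
      | mem a ha => exact congrArg Subtype.val (congrFun h ⟨a, ha⟩)
      | zero => rw [LinearMap.zero_comp, LinearMap.zero_comp]
      | add a b ha hb iha ihb => rw [LinearMap.add_comp, LinearMap.add_comp, iha, ihb]
      | smul r a ha iha => rw [LinearMap.smul_comp, LinearMap.smul_comp, iha]
    have hlin : (w : 𝔱 ≃ᵃ[ℝ] 𝔱).linear = (w' : 𝔱 ≃ᵃ[ℝ] 𝔱).linear := by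
      apply LinearEquiv.toLinearMap_injective
      ext x
      have hdiff : ∀ γ : Module.Dual ℝ 𝔱,
          γ ((w : 𝔱 ≃ᵃ[ℝ] 𝔱).linear x - (w' : 𝔱 ≃ᵃ[ℝ] 𝔱).linear x) = 0 := by
        intro γ
        rw [map_sub, sub_eq_zero]
        exact LinearMap.congr_fun (hcomp γ) x
      have hz := (Module.forall_dual_apply_eq_zero_iff ℝ _).mp hdiff
      rw [sub_eq_zero] at hz
      exact hz
    exact Subtype.ext (affine_ext hlin (hp _ w.2) (hp _ w'.2))
  haveI : Finite (S.WIB I) := Finite.of_injective F hinj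
  exact Set.toFinite _

lemma orbB_smul {ξ x : 𝔱} (hx : x ∈ S.orbB ξ) {w : 𝔱 ≃ᵃ[ℝ] 𝔱} (hw : w ∈ S.WaffB) :
    w x ∈ S.orbB ξ := by
  obtain ⟨v, hv, rfl⟩ := hx
  exact ⟨w * v, mul_mem hw hv, rfl⟩

lemma SkOrb_mem_ZVAS [FiniteDimensional ℝ 𝔱] {I : Finset (Fin (S.l + 1))}
    (hI : I.Nonempty) {ξ x : 𝔱} (hx : x ∈ S.orbB ξ) :
    SkOrb (S.WIB I) x ∈ S.ZVAS ξ I := by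
  have hfin := S.WIB_finite hI
  refine ⟨(hfin.image _).subset (SkOrb_support hfin x), ?_,
    AntiInv_SkOrb hfin S.detpm_WIB x⟩
  intro y hy
  obtain ⟨w, hw, rfl⟩ := SkOrb_support hfin x hy
  exact S.orbB_smul hx (S.WIB_le_WaffB I hw)

lemma ZVAS_zero (ξ : 𝔱) (I : Finset (Fin (S.l + 1))) : (0 : 𝔱 → ℤ) ∈ S.ZVAS ξ I := by
  refine ⟨?_, ?_, fun w hw x => by simp⟩
  · simp
  · simp

lemma ZVAS_add {ξ : 𝔱} {I : Finset (Fin (S.l + 1))} {φ ψ : 𝔱 → ℤ}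
    (hφ : φ ∈ S.ZVAS ξ I) (hψ : ψ ∈ S.ZVAS ξ I) : φ + ψ ∈ S.ZVAS ξ I := by
  refine ⟨(hφ.1.union hψ.1).subset (Function.support_add φ ψ),
    (Function.support_add φ ψ).trans (Set.union_subset hφ.2.1 hψ.2.1), ?_⟩
  intro w hw x
  simp only [Pi.add_apply, hφ.2.2 w hw x, hψ.2.2 w hw x]
  ring

lemma ZVAS_zsmul {ξ : 𝔱} {I : Finset (Fin (S.l + 1))} (z : ℤ) {φ : 𝔱 → ℤ}
    (hφ : φ ∈ S.ZVAS ξ I) : z • φ ∈ S.ZVAS ξ I := by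
  have hsupp : support (z • φ) ⊆ support φ := by
    intro x hx
    simp only [mem_support, Pi.smul_apply, smul_eq_mul] at hx ⊢
    exact fun h => hx (by rw [h, mul_zero])
  refine ⟨hφ.1.subset hsupp, hsupp.trans hφ.2.1, ?_⟩
  intro w hw x
  simp only [Pi.smul_apply, smul_eq_mul, hφ.2.2 w hw x]
  ring

lemma ChainB_zero (ξ : 𝔱) (p : ℕ) :
    (0 : Finset (Fin (S.l + 1)) → 𝔱 → ℤ) ∈ S.ChainB ξ p :=
  fun I => ⟨fun _ => S.ZVAS_zero ξ I, fun _ => rfl⟩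

lemma ChainB_add {ξ : 𝔱} {p : ℕ} {c c' : Finset (Fin (S.l + 1)) → 𝔱 → ℤ}
    (hc : c ∈ S.ChainB ξ p) (hc' : c' ∈ S.ChainB ξ p) : c + c' ∈ S.ChainB ξ p := by
  intro I
  refine ⟨fun h => S.ZVAS_add ((hc I).1 h) ((hc' I).1 h), fun h => ?_⟩
  show c I + c' I = 0
  rw [(hc I).2 h, (hc' I).2 h, add_zero]

lemma ChainB_zsmul {ξ : 𝔱} {p : ℕ} (z : ℤ) {c : Finset (Fin (S.l + 1)) → 𝔱 → ℤ}
    (hc : c ∈ S.ChainB ξ p) : z • c ∈ S.ChainB ξ p := by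
  intro I
  refine ⟨fun h => S.ZVAS_zsmul z ((hc I).1 h), fun h => ?_⟩
  show z • c I = 0
  rw [(hc I).2 h, smul_zero]

lemma ChainB_sub {ξ : 𝔱} {p : ℕ} {c c' : Finset (Fin (S.l + 1)) → 𝔱 → ℤ}
    (hc : c ∈ S.ChainB ξ p) (hc' : c' ∈ S.ChainB ξ p) : c - c' ∈ S.ChainB ξ p := by
  have h := S.ChainB_add hc (S.ChainB_zsmul (-1) hc')
  rwa [neg_one_smul, ← sub_eq_add_neg] at h

lemma single_mem_ChainB {ξ : 𝔱} {p : ℕ} {I : Finset (Fin (S.l + 1))} {φ : 𝔱 → ℤ}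
    (hcard : I.card = p + 1) (hφ : φ ∈ S.ZVAS ξ I) : single I φ ∈ S.ChainB ξ p := by
  intro K
  constructor
  · intro _
    by_cases h : K = I
    · subst h
      rw [single_self]
      exact hφ
    · rw [single_ne h]
      exact S.ZVAS_zero ξ K
  · intro hK
    exact single_ne (fun h => hK (by rw [h]; exact hcard)) φ

variable {Srep : Finset (Fin (S.l + 1)) → Finset (Fin (S.l + 1)) → Finset (𝔱 ≃ᵃ[ℝ] 𝔱)}

lemma SkRep_SkOrb_WIB [FiniteDimensional ℝ 𝔱] (hSrep : S.RepFamilyB Srep)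
    {K I : Finset (Fin (S.l + 1))} (hK : K.Nonempty) (hKI : K ⊆ I) (x : 𝔱) :
    SkRep (Srep K I) (SkOrb (S.WIB I) x) = SkOrb (S.WIB K) x :=
  SkRep_SkOrb (hSrep K I hK hKI) (S.WIB_mono hKI) (S.WIB_finite hK) S.detpm_WIB x

lemma bdGen_single_pair [FiniteDimensional ℝ 𝔱] (hSrep : S.RepFamilyB Srep)
    {i j : Fin (S.l + 1)} (hij : i ≠ j) (x : 𝔱) :
    bdGen Srep ((if i < j then (-1 : ℤ) else 1) • single {i, j} (SkOrb (S.WIB {i, j}) x)) =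
      single {i} (SkOrb (S.WIB {i}) x) - single {j} (SkOrb (S.WIB {j}) x) := by
  rw [bdGen_zsmul]
  set φ := SkOrb (S.WIB {i, j}) x with hφ
  have hmain : ∀ (K : Finset (Fin (S.l + 1))) (y : 𝔱),
      bdGen Srep (single {i, j} φ) K y =
      (if K = {i} then (if i < j then (-1 : ℤ) else 1) * SkOrb (S.WIB {i}) x y
       else if K = {j} then (if j < i then (-1 : ℤ) else 1) * SkOrb (S.WIB {j}) x y
       else 0) := by
    intro K y
    by_cases hKi : K = {i}
    · subst hKi
      rw [if_pos rfl]
      simp only [bdGen]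
      have hjmem : j ∈ ({i} : Finset (Fin (S.l + 1)))ᶜ := by
        rw [Finset.mem_compl, Finset.mem_singleton]
        exact Ne.symm hij
      have hzero : ∀ k ∈ ({i} : Finset (Fin (S.l + 1)))ᶜ, k ≠ j →
          (-1 : ℤ) ^ (Finset.filter (fun m => m < k) ({i} : Finset (Fin (S.l + 1)))).card *
            SkRep (Srep {i} (insert k {i})) (single {i, j} φ (insert k {i})) y = 0 := by
        intro k hk hkj
        have hne : insert k ({i} : Finset (Fin (S.l + 1))) ≠ {i, j} := by
          intro h
          rw [Finset.mem_compl, Finset.mem_singleton] at hk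
          rcases insert_eq_pair hij (by simpa using hk) h with ⟨rfl, hKK⟩ | ⟨rfl, -⟩
          · exact hij (Finset.singleton_injective hKK)
          · exact hkj rfl
        rw [single_ne hne, SkRep_zero, Pi.zero_apply, mul_zero]
      refine (Finset.sum_eq_single_of_mem j hjmem hzero).trans ?_
      have hins : insert j ({i} : Finset (Fin (S.l + 1))) = {i, j} := Finset.pair_comm j i
      rw [hins, single_self, S.SkRep_SkOrb_WIB hSrep ⟨i, Finset.mem_singleton_self i⟩
        (Finset.singleton_subset_iff.mpr (Finset.mem_insert_self i {j})) x]
      by_cases hlt : i < j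
      · rw [if_pos hlt, Finset.filter_singleton, if_pos hlt, Finset.card_singleton, pow_one]
      · rw [if_neg hlt, Finset.filter_singleton, if_neg hlt, Finset.card_empty, pow_zero]
    · by_cases hKj : K = {j}
      · subst hKj
        rw [if_neg hKi, if_pos rfl]
        simp only [bdGen]
        have himem : i ∈ ({j} : Finset (Fin (S.l + 1)))ᶜ := by
          rw [Finset.mem_compl, Finset.mem_singleton]
          exact hij
        have hzero : ∀ k ∈ ({j} : Finset (Fin (S.l + 1)))ᶜ, k ≠ i →
            (-1 : ℤ) ^ (Finset.filter (fun m => m < k) ({j} : Finset (Fin (S.l + 1)))).card *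
              SkRep (Srep {j} (insert k {j})) (single {i, j} φ (insert k {j})) y = 0 := by
          intro k hk hki
          have hne : insert k ({j} : Finset (Fin (S.l + 1))) ≠ {i, j} := by
            intro h
            rw [Finset.mem_compl, Finset.mem_singleton] at hk
            rcases insert_eq_pair hij (by simpa using hk) h with ⟨rfl, -⟩ | ⟨rfl, hKK⟩
            · exact hki rfl
            · exact hij (Finset.singleton_injective hKK.symm)
          rw [single_ne hne, SkRep_zero, Pi.zero_apply, mul_zero]
        refine (Finset.sum_eq_single_of_mem i himem hzero).trans ?_
        have hins : insert i ({j} : Finset (Fin (S.l + 1))) = {i, j} := rfl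
        rw [hins, single_self, S.SkRep_SkOrb_WIB hSrep ⟨j, Finset.mem_singleton_self j⟩
          (Finset.singleton_subset_iff.mpr
            (Finset.mem_insert_of_mem (Finset.mem_singleton_self j))) x]
        by_cases hlt : j < i
        · rw [if_pos hlt, Finset.filter_singleton, if_pos hlt, Finset.card_singleton,
            pow_one]
        · rw [if_neg hlt, Finset.filter_singleton, if_neg hlt, Finset.card_empty, pow_zero]
      · rw [if_neg hKi, if_neg hKj]
        simp only [bdGen]
        refine Finset.sum_eq_zero fun k hk => ?_
        have hne : insert k K ≠ {i, j} := by
          intro h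
          rw [Finset.mem_compl] at hk
          rcases insert_eq_pair hij hk h with ⟨-, hKK⟩ | ⟨-, hKK⟩
          · exact hKj hKK
          · exact hKi hKK
        rw [single_ne hne, SkRep_zero, Pi.zero_apply, mul_zero]
  funext K y
  simp only [Pi.smul_apply, Pi.sub_apply, smul_eq_mul]
  rw [hmain K y]
  by_cases hKi : K = {i}
  · subst hKi
    rw [if_pos rfl, single_self,
      single_ne (fun h => hij (Finset.singleton_injective h)) (SkOrb (S.WIB {j}) x),
      Pi.zero_apply, sub_zero]
    by_cases hlt : i < j
    · rw [if_pos hlt]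
      ring
    · rw [if_neg hlt]
      ring
  · by_cases hKj : K = {j}
    · subst hKj
      rw [if_neg hKi, if_pos rfl, single_self,
        single_ne (fun h => hij (Finset.singleton_injective h).symm) (SkOrb (S.WIB {i}) x),
        Pi.zero_apply, zero_sub]
      rcases hij.lt_or_gt with h | h
      · rw [if_pos h, if_neg (asymm h)]
        ring
      · rw [if_neg (asymm h), if_pos h]
        ring
    · rw [if_neg hKi, if_neg hKj, mul_zero, single_ne hKi, single_ne hKj,
        Pi.zero_apply, sub_zero]

lemma conn [FiniteDimensional ℝ 𝔱] (hSrep : S.RepFamilyB Srep) (ξJ : 𝔱)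
    (i j : Fin (S.l + 1)) (x : 𝔱) (hx : x ∈ S.orbB ξJ) :
    ∃ d ∈ S.ChainB ξJ 1, bdGen Srep d =
      single {i} (SkOrb (S.WIB {i}) x) - single {j} (SkOrb (S.WIB {j}) x) := by
  by_cases hij : i = j
  · subst hij
    exact ⟨0, S.ChainB_zero ξJ 1, by rw [bdGen_zero, sub_self]⟩
  · refine ⟨(if i < j then (-1 : ℤ) else 1) • single {i, j} (SkOrb (S.WIB {i, j}) x),
      ?_, S.bdGen_single_pair hSrep hij x⟩
    refine S.ChainB_zsmul _ (S.single_mem_ChainB (Finset.card_pair hij) ?_)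
    exact S.SkOrb_mem_ZVAS ⟨i, Finset.mem_insert_self i {j}⟩ hx

lemma rrefl_mem_WIB {k : Fin (S.l + 1)} {I : Finset (Fin (S.l + 1))} (hk : k ∉ I) :
    S.rrefl k ∈ S.WIB I :=
  Subgroup.subset_closure ⟨k, hk, rfl⟩

lemma rrefl_mem_WaffB (k : Fin (S.l + 1)) : S.rrefl k ∈ S.WaffB :=
  Subgroup.subset_closure ⟨k, rfl⟩

lemma SkOrb_WIB_move [FiniteDimensional ℝ 𝔱] {I : Finset (Fin (S.l + 1))}
    (hI : I.Nonempty) {v : 𝔱 ≃ᵃ[ℝ] 𝔱} (hv : v ∈ S.WIB I) (x : 𝔱) :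
    SkOrb (S.WIB I) (v x) = asign v • SkOrb (S.WIB I) x :=
  SkOrb_apply_smul (S.WIB_finite hI) S.detpm_WIB hv x

lemma part2 [FiniteDimensional ℝ 𝔱] (hSrep : S.RepFamilyB Srep) (ξJ : 𝔱)
    (i : Fin (S.l + 1)) :
    ∀ w ∈ S.WaffB, ∀ x ∈ S.orbB ξJ, ∃ d ∈ S.ChainB ξJ 1, bdGen Srep d =
      single {i} (SkOrb (S.WIB {i}) x) -
        asign w • single {i} (SkOrb (S.WIB {i}) (w x)) := by
  intro w hw
  induction hw using Subgroup.closure_induction with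
  | mem r hr =>
    obtain ⟨k, rfl⟩ := hr
    intro x hx
    by_cases hk : k = i
    · subst hk
      obtain ⟨j', hj'⟩ : ∃ j' : Fin (S.l + 1), j' ≠ k := by
        refine ⟨if k = 0 then 1 else 0, ?_⟩
        split_ifs with h
        · rw [h]
          intro hc
          rw [Fin.one_eq_zero_iff] at hc
          have := S.hl
          omega
        · exact fun hc => h hc.symm
      obtain ⟨dA, hdA, hdAe⟩ := S.conn hSrep ξJ k j' x hx
      have hrx : S.rrefl k x ∈ S.orbB ξJ := S.orbB_smul hx (S.rrefl_mem_WaffB k)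
      obtain ⟨dB, hdB, hdBe⟩ := S.conn hSrep ξJ k j' (S.rrefl k x) hrx
      refine ⟨dA - asign (S.rrefl k) • dB,
        S.ChainB_sub hdA (S.ChainB_zsmul _ hdB), ?_⟩
      rw [bdGen_sub, hdAe, bdGen_zsmul, hdBe]
      have hmem : S.rrefl k ∈ S.WIB {j'} :=
        S.rrefl_mem_WIB (by rw [Finset.mem_singleton]; exact fun h => hj' h.symm)
      rw [S.SkOrb_WIB_move ⟨j', Finset.mem_singleton_self j'⟩ hmem x,
        ← zsmul_single, smul_sub, smul_smul, asign_sq, one_smul]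
      abel
    · have hmem : S.rrefl k ∈ S.WIB {i} :=
        S.rrefl_mem_WIB (by rw [Finset.mem_singleton]; exact hk)
      refine ⟨0, S.ChainB_zero ξJ 1, ?_⟩
      rw [bdGen_zero, S.SkOrb_WIB_move ⟨i, Finset.mem_singleton_self i⟩ hmem x,
        ← zsmul_single, smul_smul, asign_sq, one_smul, sub_self]
  | one =>
    intro x hx
    refine ⟨0, S.ChainB_zero ξJ 1, ?_⟩
    rw [bdGen_zero, asign_one, one_smul, show ((1 : 𝔱 ≃ᵃ[ℝ] 𝔱) x) = x from rfl, sub_self]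
  | mul w u hw hu ihw ihu =>
    intro x hx
    obtain ⟨d1, hd1, hd1e⟩ := ihu x hx
    obtain ⟨d2, hd2, hd2e⟩ := ihw (u x) (S.orbB_smul hx hu)
    refine ⟨d1 + asign u • d2,
      S.ChainB_add hd1 (S.ChainB_zsmul _ hd2), ?_⟩
    rw [bdGen_add, hd1e, bdGen_zsmul, hd2e, show ((w * u) x) = w (u x) from rfl,
      asign_mul (S.detpm_WaffB w hw) (S.detpm_WaffB u hu), smul_sub, smul_smul,
      mul_comm (asign u) (asign w)]
    abel
  | inv w hw ihw =>
    intro x hx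
    obtain ⟨d1, hd1, hd1e⟩ := ihw (w⁻¹ x) (S.orbB_smul hx (inv_mem hw))
    refine ⟨(-(asign w⁻¹)) • d1, S.ChainB_zsmul _ hd1, ?_⟩
    rw [bdGen_zsmul, hd1e, show (w (w⁻¹ x)) = x from w.apply_symm_apply x,
      asign_inv (S.detpm_WaffB w hw), smul_sub, smul_smul, neg_smul, neg_mul, neg_smul,
      asign_sq, one_smul]
    abel

end MoreLemmas

end RSD

end CCQ

open CCQ Function

/-- in `C_0(J)`, writing `φ ∼ φ'` for `φ - φ' ∈ ∂(C_1(J))`: for all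
`i, j ∈ {0,…,l}` and `x ∈ V`, the element `Sk^{{i}}(x)` (in the `i`-th summand)
satisfies `Sk^{{i}}(x) ∼ Sk^{{j}}(x)` (in the `j`-th summand), and
`Sk^{{i}}(x) ∼ det(w)·Sk^{{i}}(w·x)` for every `w ∈ W_aff`. -/
theorem statement14 {𝔱 : Type} [NormedAddCommGroup 𝔱] [InnerProductSpace ℝ 𝔱]
    [FiniteDimensional ℝ 𝔱] (S : RSD 𝔱)
    (hBinv : ∀ β ∈ S.R, ∀ x y : 𝔱,
      ⟪x - β x • S.coroot β, y - β y • S.coroot β⟫_ℝ = ⟪x, y⟫_ℝ)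
    (hBnorm : ⟪S.coroot S.theta, S.coroot S.theta⟫_ℝ = 2)
    (J : Finset (Fin (S.l + 1))) (hJ : J.Nonempty)
    (ξJ : 𝔱) (hξJ : ∀ η : 𝔱, ⟪ξJ, η⟫_ℝ = S.nuI J η)
    (Srep : Finset (Fin (S.l + 1)) → Finset (Fin (S.l + 1)) → Finset (𝔱 ≃ᵃ[ℝ] 𝔱))
    (hSrep : S.RepFamilyB Srep)
    (i j : Fin (S.l + 1)) (x : 𝔱) (hx : x ∈ S.orbB ξJ) :
    (∃ d ∈ S.ChainB ξJ 1, bdGen Srep d =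
      single {i} (SkOrb (S.WIB {i}) x) - single {j} (SkOrb (S.WIB {j}) x)) ∧
    (∀ w ∈ S.WaffB, ∃ d ∈ S.ChainB ξJ 1, bdGen Srep d =
      single {i} (SkOrb (S.WIB {i}) x) -
        asign w • single {i} (SkOrb (S.WIB {i}) (w x))) := by
  constructor
  · exact S.conn hSrep ξJ i j x hx
  · intro w hw
    exact S.part2 hSrep ξJ i w hw x hx
end
end
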